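/- arXiv:1206.6248 — 2 statements merged into one kernel-verified Lean document; each statement's English description precedes it below -/
import Mathlib

section
/- Let W be a Coxeter group, γ a Coxeter element with fixed reduced word s₁s₂⋯sₙ, and for w ∈ W let α_γ(w) ⊆ ℕ be the set of positions of the γ-sorting word of w in the half-infinite word γ^∞ = s₁⋯sₙ|s₁⋯sₙ|⋯. If u ≤ v in right weak order, then α_γ(u) ⊆ α_γ(v). -/
open List CoxeterSystem

set_option linter.unusedSectionVars false

/-- The right weak order on a Coxeter group:
`u ≤ v` iff `ℓ(v) = ℓ(u) + ℓ(u⁻¹v)`. -/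
def WeakLE {B W : Type*} [Group W] {M : CoxeterMatrix B} (cs : CoxeterSystem M W)
    (u v : W) : Prop :=
  cs.length v = cs.length u + cs.length (u⁻¹ * v)

/-- The letter of the half-infinite word `γ^∞ = γ|γ|⋯` at (0-indexed) position `i`,
where the Coxeter element `γ` is given by the reduced word `γword`. -/
def gammaLetter {B : Type*} (γword : List B) (hne : γword ≠ []) (i : ℕ) : B :=
  γword.get ⟨i % γword.length, Nat.mod_lt _ (List.length_pos_iff.mpr hne)⟩

/-- The subword of `γ^∞` whose positions form the finite set `A`. -/
def posWord {B : Type*} (γword : List B) (hne : γword ≠ []) (A : Finset ℕ) : List B :=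
  (A.sort (· ≤ ·)).map (gammaLetter γword hne)

/-- `α` assigns to each `w ∈ W` the position set of its `γ`-sorting word: the subword of
`γ^∞` at positions `α w` is a reduced word for `w`, and `α w` is lexicographically least
(as an increasing sequence of positions) among all such position sets. -/
def IsSortingMap {B W : Type*} [Group W] {M : CoxeterMatrix B} (cs : CoxeterSystem M W)
    (γword : List B) (hne : γword ≠ []) (α : W → Finset ℕ) : Prop :=
  ∀ w : W,
    (cs.wordProd (posWord γword hne (α w)) = w ∧ cs.IsReduced (posWord γword hne (α w))) ∧
    ∀ A : Finset ℕ, cs.wordProd (posWord γword hne A) = w →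
      cs.IsReduced (posWord γword hne A) →
      α w = A ∨ List.Lex (· < ·) ((α w).sort (· ≤ ·)) (A.sort (· ≤ ·))

/-- `w` is `γ`-sortable, characterized via position sets: whenever a position `i ≥ n`
occurs in `α w`, so does `i − n` (blocks of the sorting word weakly decrease). -/
def SortableVia {W : Type*} (n : ℕ) (α : W → Finset ℕ) (w : W) : Prop :=
  ∀ i ∈ α w, n ≤ i → i - n ∈ α w
set_option maxHeartbeats 800000

namespace Stmt12Aux

variable {B W : Type*} [Group W] [DecidableEq W] {M : CoxeterMatrix B} (cs : CoxeterSystem M W)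

local prefix:100 "s" => cs.simple
local prefix:100 "π" => cs.wordProd
local prefix:100 "ℓ" => cs.length

/-- The Björner–Brenti sign permutation attached to a generator. -/
def etaFun (c : B) : W × Bool → W × Bool :=
  fun x => (s c * x.1 * s c, xor (decide (x.1 = s c)) x.2)

lemma etaFun_invol (c : B) (x : W × Bool) : etaFun cs c (etaFun cs c x) = x := by
  obtain ⟨t, ε⟩ := x
  have h1 : s c * (s c * t * s c) * s c = t := by
    have h := cs.simple_mul_simple_self c
    calc s c * (s c * t * s c) * s c = (s c * s c) * t * (s c * s c) := by group
    _ = t := by rw [h]; group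
  have h2 : (s c * t * s c = s c) ↔ (t = s c) := by
    constructor
    · intro h
      have h3 : s c * (s c * t * s c) * s c = s c * s c * s c := by rw [h]
      rw [h1] at h3
      rw [h3, cs.simple_mul_simple_self c, one_mul]
    · intro h; rw [h]; rw [cs.simple_mul_simple_self c]; group
  unfold etaFun
  simp only [h1, h2]
  refine Prod.ext rfl ?_
  simp only
  cases (decide (t = s c)) <;> cases ε <;> rfl

def eta (c : B) : Equiv.Perm (W × Bool) :=
  ⟨etaFun cs c, etaFun cs c, etaFun_invol cs c, etaFun_invol cs c⟩

@[simp] lemma eta_apply (c : B) (t : W) (ε : Bool) :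
    eta cs c (t, ε) = (s c * t * s c, xor (decide (t = s c)) ε) := rfl

lemma decide_odd_add (a b : ℕ) :
    decide (Odd (a + b)) = xor (decide (Odd a)) (decide (Odd b)) := by
  rcases Nat.even_or_odd a with ha | ha <;> rcases Nat.even_or_odd b with hb | hb
  · rw [decide_eq_false (Nat.not_odd_iff_even.mpr ha),
      decide_eq_false (Nat.not_odd_iff_even.mpr hb),
      decide_eq_false (Nat.not_odd_iff_even.mpr (ha.add hb))]
    rfl
  · rw [decide_eq_false (Nat.not_odd_iff_even.mpr ha), decide_eq_true hb,
      decide_eq_true (ha.add_odd hb)]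
    rfl
  · rw [decide_eq_true ha, decide_eq_false (Nat.not_odd_iff_even.mpr hb),
      decide_eq_true (ha.add_even hb)]
    rfl
  · rw [decide_eq_true ha, decide_eq_true hb,
      decide_eq_false (Nat.not_odd_iff_even.mpr (ha.add_odd hb))]
    rfl

lemma prod_eta_apply (ω : List B) (t : W) (ε : Bool) :
    ((ω.reverse.map (eta cs)).prod) (t, ε) =
      ((π ω)⁻¹ * t * (π ω), xor (decide (Odd ((cs.leftInvSeq ω).count t))) ε) := by
  induction ω generalizing t ε with
  | nil => simp
  | cons c ω' ih =>
      have hrev : (c :: ω').reverse = ω'.reverse ++ [c] := by simp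
      rw [hrev, List.map_append, List.prod_append]
      have : ((ω'.reverse.map (eta cs)).prod * ([c].map (eta cs)).prod) (t, ε)
          = (ω'.reverse.map (eta cs)).prod ((eta cs c) (t, ε)) := by
        simp [Equiv.Perm.mul_apply]
      rw [this, eta_apply, ih]
      have hlis : cs.leftInvSeq (c :: ω') =
          s c :: List.map (MulAut.conj (s c)) (cs.leftInvSeq ω') := rfl
      have hcount : (cs.leftInvSeq (c :: ω')).count t
          = (cs.leftInvSeq ω').count (s c * t * s c) + (if t = s c then 1 else 0) := by
        rw [hlis, List.count_cons]
        congr 1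
        · have hinj : Function.Injective (MulAut.conj (s c) : W → W) :=
            (MulAut.conj (s c)).injective
          have hts : t = (MulAut.conj (s c)) (s c * t * s c) := by
            simp [MulAut.conj_apply, cs.inv_simple]
            have h := cs.simple_mul_simple_self c
            calc t = (s c * s c) * t * (s c * s c) := by rw [h]; group
            _ = s c * (s c * t * s c) * s c := by group
          have hc2 := List.count_map_of_injective (cs.leftInvSeq ω') _ hinj (s c * t * s c)
          rw [← hts] at hc2
          exact hc2
        · by_cases h : t = s c
          · simp [h]
          · have hb : (s c == t) = false := beq_eq_false_iff_ne.mpr (fun hh => h hh.symm)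
            simp [hb, h]
      rw [hcount, Prod.mk.injEq]
      refine ⟨?_, ?_⟩
      · show (π ω')⁻¹ * (s c * t * s c) * (π ω') = (π (c :: ω'))⁻¹ * t * (π (c :: ω'))
        rw [cs.wordProd_cons, mul_inv_rev, cs.inv_simple]
        group
      · show xor (decide (Odd ((cs.leftInvSeq ω').count (s c * t * s c))))
            (xor (decide (t = s c)) ε)
          = xor (decide (Odd ((cs.leftInvSeq ω').count (s c * t * s c) + if t = s c then 1 else 0))) ε
        rw [decide_odd_add]
        have : decide (Odd (if t = s c then 1 else 0)) = decide (t = s c) := by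
          by_cases h : t = s c <;> simp [h]
        rw [this]
        cases (decide (Odd ((cs.leftInvSeq ω').count (s c * t * s c)))) <;>
          cases (decide (t = s c)) <;> cases ε <;> rfl


lemma drop_alternatingWord (x y : B) (k l : ℕ) (h : k ≤ l) :
    (alternatingWord x y l).drop k = alternatingWord x y (l - k) := by
  induction k generalizing l with
  | zero => simp
  | succ k ih =>
      obtain ⟨l'', rfl⟩ : ∃ l'', l = l'' + 1 := ⟨l - 1, by omega⟩
      rw [alternatingWord_succ' x y l'']
      simp only [List.drop_succ_cons]
      rw [ih _ (by omega)]
      congr 1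
      omega

lemma simple_mul_pow (i j : B) (k : ℕ) :
    s i * (s j * s i) ^ k = ((s j * s i) ^ k)⁻¹ * s i := by
  have hbase : (MulAut.conj (s i)) (s j * s i) = (s j * s i)⁻¹ := by
    rw [MulAut.conj_apply, mul_inv_rev, cs.inv_simple, cs.inv_simple]
    calc s i * (s j * s i) * s i = s i * s j * (s i * s i) := by group
    _ = s i * s j := by rw [cs.simple_mul_simple_self, mul_one]
  have h := map_pow (MulAut.conj (s i)) (s j * s i) k
  rw [hbase, inv_pow] at h
  have h2 : s i * (s j * s i) ^ k * (s i)⁻¹ = ((s j * s i) ^ k)⁻¹ := by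
    rw [← MulAut.conj_apply, h]
  calc s i * (s j * s i) ^ k = (s i * (s j * s i) ^ k * (s i)⁻¹) * s i := by group
  _ = ((s j * s i) ^ k)⁻¹ * s i := by rw [h2]

lemma alt_step (i j : B) (n : ℕ) :
    (π (alternatingWord j i n))⁻¹ * π (alternatingWord j i (n + 1))
      = ((s j * s i) ^ n)⁻¹ * s i := by
  rcases Nat.even_or_odd n with he | ho
  · obtain ⟨a, rfl⟩ := he
    have h1 : π (alternatingWord j i (a + a)) = (s j * s i) ^ ((a + a) / 2) := by
      rw [cs.prod_alternatingWord_eq_mul_pow, if_pos (by exact ⟨a, rfl⟩), one_mul]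
    have h2 : π (alternatingWord j i (a + a + 1))
        = s i * (s j * s i) ^ ((a + a + 1) / 2) := by
      rw [cs.prod_alternatingWord_eq_mul_pow, if_neg (by simp [Nat.even_add_one, parity_simps])]
    have hd1 : (a + a) / 2 = a := by omega
    have hd2 : (a + a + 1) / 2 = a := by omega
    rw [h1, h2, hd1, hd2, simple_mul_pow]
    generalize (s j * s i) = y
    have : a + a = 2 * a := by omega
    rw [this]
    group
  · obtain ⟨a, rfl⟩ := ho
    have h1 : π (alternatingWord j i (2 * a + 1)) = s i * (s j * s i) ^ ((2 * a + 1) / 2) := by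
      rw [cs.prod_alternatingWord_eq_mul_pow, if_neg (by simp [Nat.even_add_one, parity_simps])]
    have h2 : π (alternatingWord j i (2 * a + 1 + 1)) = (s j * s i) ^ ((2 * a + 2) / 2) := by
      rw [cs.prod_alternatingWord_eq_mul_pow, if_pos (by exact ⟨a + 1, by omega⟩), one_mul]
    have hd1 : (2 * a + 1) / 2 = a := by omega
    have hd2 : (2 * a + 2) / 2 = a + 1 := by omega
    rw [h1, h2, hd1, hd2, mul_inv_rev, cs.inv_simple, mul_assoc, simple_mul_pow]
    generalize (s j * s i) = y
    group


lemma getD_leftInvSeq_eq_prod_take (ω : List B) (k : ℕ) (hk : k < ω.length) :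
    (cs.leftInvSeq ω).getD k 1 = π (ω.take (k + 1)) * (π (ω.take k))⁻¹ := by
  rw [cs.getD_leftInvSeq]
  rw [List.take_succ]
  rw [cs.wordProd_append]
  rw [List.getElem?_eq_getElem hk]
  simp only [Option.map_some, Option.getD_some, Option.toList_some]
  rw [cs.wordProd_singleton]

lemma lis_alt_entry (i j : B) (m : ℕ) (k : ℕ) (hk : k < 2 * m)
    (hπ : π (alternatingWord j i (2 * m)) = 1) :
    (cs.leftInvSeq (alternatingWord j i (2 * m))).getD k 1
      = ((s j * s i) ^ (2 * m - k - 1))⁻¹ * s i := by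
  set ω₀ := alternatingWord j i (2 * m) with hω₀
  have hlen : ω₀.length = 2 * m := by rw [hω₀, length_alternatingWord]
  have htake : ∀ l ≤ 2 * m, π (ω₀.take l) = (π (alternatingWord j i (2 * m - l)))⁻¹ := by
    intro l hl
    have hsplit : π (ω₀.take l) * π (ω₀.drop l) = 1 := by
      rw [← cs.wordProd_append, List.take_append_drop, hπ]
    rw [drop_alternatingWord j i l (2 * m) hl] at hsplit
    exact eq_inv_of_mul_eq_one_left hsplit
  rw [getD_leftInvSeq_eq_prod_take cs ω₀ k (by omega)]
  rw [htake (k + 1) (by omega), htake k (by omega), inv_inv]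
  set n' := 2 * m - k - 1 with hn'
  have hk1 : 2 * m - (k + 1) = n' := by omega
  have hk2 : 2 * m - k = n' + 1 := by omega
  rw [hk1, hk2]
  exact alt_step cs i j n' 

lemma eta_pow_word (x y : B) (k : ℕ) :
    ((alternatingWord x y (2 * k)).reverse.map (eta cs)).prod = (eta cs y * eta cs x) ^ k := by
  induction k with
  | zero => simp [alternatingWord]
  | succ k ih =>
      have h1 : alternatingWord x y (2 * (k + 1)) = (alternatingWord y x (2 * k + 1)).concat y := by
        rw [show 2 * (k + 1) = (2 * k + 1) + 1 by omega, alternatingWord_succ]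
      have h2 : alternatingWord y x (2 * k + 1) = (alternatingWord x y (2 * k)).concat x := by
        rw [alternatingWord_succ]
      rw [h1, h2]
      simp only [List.concat_eq_append, List.reverse_append, List.reverse_singleton,
        List.singleton_append, List.map_cons, List.map_append, List.map_nil,
        List.prod_cons, List.prod_append, List.prod_nil]
      rw [ih, pow_succ']
      simp [mul_assoc]

lemma eta_braid (i j : B) : (eta cs i * eta cs j) ^ M i j = 1 := by
  set m := M i j with hm
  have hπ : π (alternatingWord j i (2 * m)) = 1 := by
    rw [cs.prod_alternatingWord_eq_mul_pow, if_pos ⟨m, by omega⟩, one_mul]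
    have h2 : 2 * m / 2 = m := by omega
    rw [h2, hm, cs.simple_mul_simple_pow' i j]
  have hlislen : (cs.leftInvSeq (alternatingWord j i (2 * m))).length = 2 * m := by
    rw [cs.length_leftInvSeq, length_alternatingWord]
  have heq : (cs.leftInvSeq (alternatingWord j i (2 * m))).drop m
      = (cs.leftInvSeq (alternatingWord j i (2 * m))).take m := by
    apply List.ext_getElem
    · rw [List.length_take, List.length_drop]; omega
    · intro k hk1 hk2
      rw [List.length_drop] at hk1
      rw [List.getElem_take, List.getElem_drop]
      have hkm : k < m := by omega
      rw [← List.getD_eq_getElem _ 1, ← List.getD_eq_getElem _ 1]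
      rw [lis_alt_entry cs i j m (m + k) (by omega) hπ,
        lis_alt_entry cs i j m k (by omega) hπ]
      congr 2
      have h1 : 2 * m - (m + k) - 1 = m - k - 1 := by omega
      have h2 : 2 * m - k - 1 = (m - k - 1) + m := by omega
      rw [h1, h2, pow_add, hm, cs.simple_mul_simple_pow' i j, mul_one]
  have hdouble : cs.leftInvSeq (alternatingWord j i (2 * m)) =
      (cs.leftInvSeq (alternatingWord j i (2 * m))).take m
        ++ (cs.leftInvSeq (alternatingWord j i (2 * m))).take m := by
    nth_rw 1 [← List.take_append_drop m (cs.leftInvSeq (alternatingWord j i (2 * m)))]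
    rw [heq]
  have hcount : ∀ t : W, ¬ Odd ((cs.leftInvSeq (alternatingWord j i (2 * m))).count t) := by
    intro t
    rw [hdouble, List.count_append, Nat.odd_iff]
    omega
  apply Equiv.ext
  rintro ⟨t, ε⟩
  have h := prod_eta_apply cs (alternatingWord j i (2 * m)) t ε
  rw [eta_pow_word cs j i m] at h
  rw [h, hπ]
  rw [decide_eq_false (hcount t)]
  simp


/-- The sign representation of the Coxeter group on `W × Bool`. -/
def invPerm : W →* Equiv.Perm (W × Bool) :=
  cs.lift ⟨eta cs, fun i j => eta_braid cs i j⟩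

lemma invPerm_simple (i : B) : invPerm cs (s i) = eta cs i :=
  cs.lift_apply_simple _ i

lemma invPerm_wordProd_inv (ω : List B) (t : W) (ε : Bool) :
    invPerm cs ((π ω)⁻¹) (t, ε) =
      ((π ω)⁻¹ * t * (π ω), xor (decide (Odd ((cs.leftInvSeq ω).count t))) ε) := by
  have h1 : (π ω)⁻¹ = π (ω.reverse) := (cs.wordProd_reverse ω).symm
  have h2 : invPerm cs (π (ω.reverse)) = ((ω.reverse).map (eta cs)).prod := by
    rw [CoxeterSystem.wordProd]
    rw [map_list_prod]
    congr 1
    rw [List.map_map]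
    congr 1
    funext c
    exact invPerm_simple cs c
  rw [h1, h2, prod_eta_apply, cs.wordProd_reverse]

lemma parity_count_lis (ω₁ ω₂ : List B) (h : π ω₁ = π ω₂) (t : W) :
    (Odd ((cs.leftInvSeq ω₁).count t) ↔ Odd ((cs.leftInvSeq ω₂).count t)) := by
  have h1 := invPerm_wordProd_inv cs ω₁ t false
  have h2 := invPerm_wordProd_inv cs ω₂ t false
  rw [h] at h1
  rw [h1] at h2
  have hsnd := congrArg Prod.snd h2
  simp only [Bool.xor_false] at hsnd
  exact decide_eq_decide.mp hsnd

lemma simple_mem_leftInvSeq_of_isLeftDescent {ω : List B} (hred : cs.IsReduced ω)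
    {i : B} (h : ℓ (s i * π ω) < ℓ (π ω)) : s i ∈ cs.leftInvSeq ω := by
  obtain ⟨τ, hτred, hτ⟩ := cs.exists_reduced_word' (s i * π ω)
  have hlen : ℓ (s i * π ω) + 1 = ℓ (π ω) := by
    rcases cs.length_simple_mul (π ω) i with h' | h' <;> omega
  have hπ' : π (i :: τ) = π ω := by
    rw [cs.wordProd_cons, ← hτ, ← mul_assoc, cs.simple_mul_simple_self, one_mul]
  have hred' : cs.IsReduced (i :: τ) := by
    unfold CoxeterSystem.IsReduced at *
    rw [hπ', List.length_cons, ← hτred, ← hτ]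
    omega
  have hmem : s i ∈ cs.leftInvSeq (i :: τ) := by
    show s i ∈ s i :: _
    exact List.mem_cons_self
  have hcount1 : (cs.leftInvSeq (i :: τ)).count (s i) = 1 := by
    have hle := List.nodup_iff_count_le_one.mp (hred'.nodup_leftInvSeq) (s i)
    have hpos := List.count_pos_iff.mpr hmem
    omega
  have hodd : Odd ((cs.leftInvSeq (i :: τ)).count (s i)) := by rw [hcount1]; exact odd_one
  have := (parity_count_lis cs (i :: τ) ω hπ' (s i)).mp hodd
  have : 0 < (cs.leftInvSeq ω).count (s i) := by
    rcases this with ⟨c, hc⟩; omega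
  exact List.count_pos_iff.mp this

/-- Lifting a left descent along the right weak order. -/
lemma descent_lift {u v : W} {i : B} (huv : ℓ v = ℓ u + ℓ (u⁻¹ * v))
    (hu : ℓ (s i * u) < ℓ u) :
    ℓ (s i * v) < ℓ v ∧ ℓ (s i * v) = ℓ (s i * u) + ℓ ((s i * u)⁻¹ * (s i * v)) := by
  have h1 : ℓ (s i * u) + 1 = ℓ u := by
    rcases cs.length_simple_mul u i with h' | h' <;> omega
  have h2 : ℓ (s i * v) ≤ ℓ (s i * u) + ℓ (u⁻¹ * v) := by
    have : (s i * u) * (u⁻¹ * v) = s i * v := by group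
    calc ℓ (s i * v) = ℓ ((s i * u) * (u⁻¹ * v)) := by rw [this]
    _ ≤ _ := cs.length_mul_le _ _
  have h3 : ℓ v ≤ ℓ (s i * v) + 1 := by
    have hv : s i * (s i * v) = v := cs.simple_mul_simple_cancel_left i
    calc ℓ v = ℓ (s i * (s i * v)) := by rw [hv]
    _ ≤ ℓ (s i * v) + 1 := by
        rcases cs.length_simple_mul (s i * v) i with h' | h' <;> omega
  have hq : (s i * u)⁻¹ * (s i * v) = u⁻¹ * v := by
    rw [mul_inv_rev, cs.inv_simple, mul_assoc, ← mul_assoc (s i), cs.simple_mul_simple_self,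
      one_mul]
  constructor
  · omega
  · rw [hq]; omega

/-- Lifting a non-descent along the right weak order: exchange-based lemma. -/
lemma nondescent_lift {u v : W} {i : B} (huv : ℓ v = ℓ u + ℓ (u⁻¹ * v))
    (hu : ¬ ℓ (s i * u) < ℓ u) (hv : ℓ (s i * v) < ℓ v) :
    ℓ (s i * v) = ℓ u + ℓ (u⁻¹ * (s i * v)) := by
  obtain ⟨ωu, hredu, hωu⟩ := cs.exists_reduced_word' u
  obtain ⟨ωx, hredx, hωx⟩ := cs.exists_reduced_word' (u⁻¹ * v)
  have hπ : π (ωu ++ ωx) = v := by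
    rw [cs.wordProd_append, ← hωu, ← hωx]
    group
  have e1 : ℓ u = ωu.length := by rw [hωu]; exact hredu
  have e2 : ℓ (u⁻¹ * v) = ωx.length := by rw [hωx]; exact hredx
  have hred : cs.IsReduced (ωu ++ ωx) := by
    unfold CoxeterSystem.IsReduced
    rw [hπ, List.length_append]
    omega
  have hdesc : ℓ (s i * π (ωu ++ ωx)) < ℓ (π (ωu ++ ωx)) := by rw [hπ]; exact hv
  have hmem := simple_mem_leftInvSeq_of_isLeftDescent cs hred hdesc
  obtain ⟨k, hk, hkeq⟩ := List.mem_iff_getElem.mp hmem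
  rw [cs.length_leftInvSeq, List.length_append] at hk
  have hkD : (cs.leftInvSeq (ωu ++ ωx)).getD k 1 = s i := by
    rw [List.getD_eq_getElem _ 1 (by rw [cs.length_leftInvSeq, List.length_append]; exact hk)]
    exact hkeq
  have hknot : ¬ k < ωu.length := by
    intro hklt
    have htk : (ωu ++ ωx).take ωu.length = ωu := List.take_left
    have hmem' : s i ∈ cs.leftInvSeq ωu := by
      have h1 : cs.leftInvSeq ωu = (cs.leftInvSeq (ωu ++ ωx)).take ωu.length := by
        rw [← cs.leftInvSeq_take, htk]
      rw [h1]
      have hlt : k < ((cs.leftInvSeq (ωu ++ ωx)).take ωu.length).length := by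
        rw [List.length_take, cs.length_leftInvSeq, List.length_append]
        omega
      have h2 : ((cs.leftInvSeq (ωu ++ ωx)).take ωu.length)[k]'hlt = s i := by
        rw [List.getElem_take]
        exact hkeq
      rw [← h2]
      exact List.getElem_mem _
    have := cs.isLeftInversion_of_mem_leftInvSeq hredu hmem'
    rw [← hωu] at this
    exact hu this.2
  have herase : s i * v = π ((ωu ++ ωx).eraseIdx k) := by
    rw [← hπ, ← hkD, cs.getD_leftInvSeq_mul_wordProd]
  have herase2 : (ωu ++ ωx).eraseIdx k = ωu ++ ωx.eraseIdx (k - ωu.length) :=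
    List.eraseIdx_append_of_length_le (by omega) _
  have hlenx : (ωx.eraseIdx (k - ωu.length)).length = ωx.length - 1 := by
    rw [List.length_eraseIdx]
    simp only [if_pos (by omega : k - ωu.length < ωx.length)]
  have hle : ℓ (u⁻¹ * (s i * v)) ≤ ωx.length - 1 := by
    have : u⁻¹ * (s i * v) = π (ωx.eraseIdx (k - ωu.length)) := by
      rw [herase, herase2, cs.wordProd_append, ← hωu]
      group
    rw [this, ← hlenx]
    exact cs.length_wordProd_le _
  have hx1 : 1 ≤ ωx.length := by
    by_contra hcon
    have : ωx = [] := by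
      cases ωx
      · rfl
      · simp at hcon
    rw [this] at hωx
    simp only [cs.wordProd_nil] at hωx
    have hvu : u = v := inv_mul_eq_one.mp hωx
    rw [← hvu] at hv
    exact hu hv
  have hlv : ℓ (s i * v) + 1 = ℓ v := by
    rcases cs.length_simple_mul v i with h' | h' <;> omega
  have hge : ℓ (s i * v) ≤ ℓ u + ℓ (u⁻¹ * (s i * v)) := by
    have : u * (u⁻¹ * (s i * v)) = s i * v := by group
    calc ℓ (s i * v) = ℓ (u * (u⁻¹ * (s i * v))) := by rw [this]
    _ ≤ _ := cs.length_mul_le _ _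
  omega


section Greedy

variable (γword : List B) (hne : γword ≠ [])

/-- The remaining part of `w` after greedily scanning the first `i` positions of `γ^∞`. -/
noncomputable def Drem (w : W) (i : ℕ) : W :=
  Nat.rec w (fun i r =>
    if cs.length (cs.simple (gammaLetter γword hne i) * r) < cs.length r
    then cs.simple (gammaLetter γword hne i) * r else r) i

lemma Drem_zero (w : W) : Drem cs γword hne w 0 = w := rfl

lemma Drem_succ (w : W) (i : ℕ) :
    Drem cs γword hne w (i + 1) =
      if cs.length (cs.simple (gammaLetter γword hne i) * Drem cs γword hne w i)
          < cs.length (Drem cs γword hne w i)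
      then cs.simple (gammaLetter γword hne i) * Drem cs γword hne w i
      else Drem cs γword hne w i := rfl

/-- Whether the greedy algorithm takes position `i`. -/
noncomputable def takesb (w : W) (i : ℕ) : Bool :=
  decide (cs.length (cs.simple (gammaLetter γword hne i) * Drem cs γword hne w i)
    < cs.length (Drem cs γword hne w i))

lemma Drem_succ_takes {w : W} {i : ℕ} (h : takesb cs γword hne w i = true) :
    Drem cs γword hne w (i + 1) = cs.simple (gammaLetter γword hne i) * Drem cs γword hne w i := by
  unfold takesb at h
  rw [decide_eq_true_iff] at h
  rw [Drem_succ, if_pos h]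

lemma Drem_succ_not_takes {w : W} {i : ℕ} (h : ¬ takesb cs γword hne w i = true) :
    Drem cs γword hne w (i + 1) = Drem cs γword hne w i := by
  unfold takesb at h
  rw [decide_eq_true_iff] at h
  rw [Drem_succ, if_neg h]

lemma takes_lt {w : W} {i : ℕ} (h : takesb cs γword hne w i = true) :
    ℓ (cs.simple (gammaLetter γword hne i) * Drem cs γword hne w i)
      < ℓ (Drem cs γword hne w i) := by
  unfold takesb at h
  rwa [decide_eq_true_iff] at h

lemma Drem_length_succ_le (w : W) (i : ℕ) :
    ℓ (Drem cs γword hne w (i + 1)) ≤ ℓ (Drem cs γword hne w i) := by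
  by_cases h : takesb cs γword hne w i = true
  · rw [Drem_succ_takes cs γword hne h]
    exact le_of_lt (takes_lt cs γword hne h)
  · rw [Drem_succ_not_takes cs γword hne h]

lemma Drem_length_mono (w : W) {i j : ℕ} (h : i ≤ j) :
    ℓ (Drem cs γword hne w j) ≤ ℓ (Drem cs γword hne w i) := by
  induction j with
  | zero => simp_all
  | succ j ih =>
      rcases Nat.lt_or_ge i (j + 1) with h' | h'
      · exact le_trans (Drem_length_succ_le cs γword hne w j) (ih (by omega))
      · have : i = j + 1 := by omega
        rw [this]

lemma Drem_one_of (w : W) {i j : ℕ} (h : i ≤ j) (h1 : Drem cs γword hne w i = 1) :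
    Drem cs γword hne w j = 1 := by
  induction j with
  | zero => have : i = 0 := by omega
            rwa [this] at h1
  | succ j ih =>
      rcases Nat.lt_or_ge i (j + 1) with h' | h'
      · have hj : Drem cs γword hne w j = 1 := ih (by omega)
        have hnt : ¬ takesb cs γword hne w j = true := by
          unfold takesb
          rw [decide_eq_true_iff, hj]
          simp [cs.length_simple]
        rw [Drem_succ_not_takes cs γword hne hnt, hj]
      · have : i = j + 1 := by omega
        rwa [this] at h1

lemma Drem_stable (w : W) (i : ℕ) (k : ℕ)
    (h : ∀ j, i ≤ j → j < i + k → ¬ takesb cs γword hne w j = true) :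
    Drem cs γword hne w (i + k) = Drem cs γword hne w i := by
  induction k with
  | zero => rfl
  | succ k ih =>
      rw [show i + (k + 1) = (i + k) + 1 by omega,
        Drem_succ_not_takes cs γword hne (h (i + k) (by omega) (by omega))]
      exact ih (fun j hj1 hj2 => h j hj1 (by omega))

lemma Drem_exists_take (hγ : ∀ b : B, b ∈ γword) (w : W) (i : ℕ)
    (h : Drem cs γword hne w i ≠ 1) :
    ∃ j, i ≤ j ∧ j < i + γword.length ∧ takesb cs γword hne w j = true := by
  by_contra hcon
  push_neg at hcon
  obtain ⟨b, hb⟩ := cs.exists_leftDescent_of_ne_one h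
  obtain ⟨⟨p, hp⟩, hpeq⟩ := List.mem_iff_get.mp (hγ b)
  have hnpos : 0 < γword.length := List.length_pos_iff.mpr hne
  obtain ⟨q, r, hqr, hrlt⟩ : ∃ q r, i = γword.length * q + r ∧ r < γword.length :=
    ⟨i / γword.length, i % γword.length, (Nat.div_add_mod i γword.length).symm,
      Nat.mod_lt i hnpos⟩
  set j := p + γword.length * q + (if p < r then γword.length else 0) with hj
  have hij : i ≤ j ∧ j < i + γword.length := by
    by_cases hcase : p < r <;> rw [hj] <;> simp only [hcase, if_true, if_false] <;> omega
  have hjmod : j % γword.length = p := by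
    by_cases hcase : p < r
    · have hjq : j = p + γword.length * (q + 1) := by rw [hj, if_pos hcase]; ring
      rw [hjq, Nat.add_mul_mod_self_left, Nat.mod_eq_of_lt hp]
    · have hjq : j = p + γword.length * q := by rw [hj, if_neg hcase]; ring
      rw [hjq, Nat.add_mul_mod_self_left, Nat.mod_eq_of_lt hp]
  have hdj : Drem cs γword hne w j = Drem cs γword hne w i := by
    have hst := Drem_stable cs γword hne w i (j - i)
      (fun j' hj1 hj2 => hcon j' hj1 (by omega))
    rw [show i + (j - i) = j by omega] at hst
    exact hst
  have hlet : gammaLetter γword hne j = b := by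
    unfold gammaLetter
    rw [← hpeq]
    congr 1
    simp only [Fin.mk.injEq]
    exact hjmod
  have htk : takesb cs γword hne w j = true := by
    unfold takesb
    rw [decide_eq_true_iff, hdj, hlet]
    exact hb
  exact hcon j hij.1 hij.2 htk

lemma Drem_final (hγ : ∀ b : B, b ∈ γword) (w : W) :
    Drem cs γword hne w (γword.length * ℓ w) = 1 := by
  set n := γword.length with hn
  have key : ∀ k, Drem cs γword hne w (n * k) = 1 ∨ ℓ (Drem cs γword hne w (n * k)) + k ≤ ℓ w := by
    intro k
    induction k with
    | zero =>
        right
        rw [Nat.mul_zero]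
        show ℓ w + 0 ≤ ℓ w
        omega
    | succ k ih =>
        by_cases h1 : Drem cs γword hne w (n * k) = 1
        · left
          exact Drem_one_of cs γword hne w (by nlinarith) h1
        · rcases ih with ih | ih
          · exact absurd ih h1
          · right
            obtain ⟨j, hj1, hj2, hj3⟩ := Drem_exists_take cs γword hne hγ w (n * k) h1
            have hstep : ℓ (Drem cs γword hne w (j + 1)) < ℓ (Drem cs γword hne w j) := by
              rw [Drem_succ_takes cs γword hne hj3]
              exact takes_lt cs γword hne hj3
            have hm1 : ℓ (Drem cs γword hne w j) ≤ ℓ (Drem cs γword hne w (n * k)) :=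
              Drem_length_mono cs γword hne w hj1
            have hm2 : ℓ (Drem cs γword hne w (n * (k + 1))) ≤ ℓ (Drem cs γword hne w (j + 1)) :=
              Drem_length_mono cs γword hne w (by nlinarith)
            omega
  rcases key (ℓ w) with h | h
  · exact h
  · have : ℓ (Drem cs γword hne w (n * ℓ w)) = 0 := by omega
    exact cs.length_eq_zero_iff.mp this

lemma Drem_one_ge (hγ : ∀ b : B, b ∈ γword) (w : W) {i : ℕ}
    (h : γword.length * ℓ w ≤ i) : Drem cs γword hne w i = 1 :=
  Drem_one_of cs γword hne w h (Drem_final cs γword hne hγ w)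

lemma takes_imp_lt (hγ : ∀ b : B, b ∈ γword) (w : W) {i : ℕ}
    (h : takesb cs γword hne w i = true) : i < γword.length * ℓ w := by
  by_contra hcon
  push_neg at hcon
  have h1 := Drem_one_ge cs γword hne hγ w hcon
  have := takes_lt cs γword hne h
  rw [h1] at this
  simp [cs.length_simple] at this


lemma mem_range'_iff {a n j : ℕ} : j ∈ List.range' a n ↔ a ≤ j ∧ j < a + n := by
  rw [List.mem_range']
  constructor
  · rintro ⟨i, hi, rfl⟩; omega
  · rintro ⟨h1, h2⟩; exact ⟨j - a, by omega, by omega⟩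

lemma pairwise_lt_range' : ∀ (n a : ℕ), List.Pairwise (· < ·) (List.range' a n)
  | 0, _ => List.Pairwise.nil
  | (n+1), a => by
      rw [List.range'_succ]
      refine List.Pairwise.cons ?_ (pairwise_lt_range' n (a + 1))
      intro m hm
      rw [mem_range'_iff] at hm
      omega

/-- The greedy word: positions in `[0, N)` taken by the greedy algorithm. -/
noncomputable def gList (w : W) : List ℕ :=
  (List.range (γword.length * cs.length w)).filter (takesb cs γword hne w)

/-- The greedy positions from `i` onwards. -/
noncomputable def gFrom (w : W) (i : ℕ) : List ℕ :=
  (List.range' i (γword.length * cs.length w - i)).filter (takesb cs γword hne w)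

lemma gFrom_zero (w : W) : gFrom cs γword hne w 0 = gList cs γword hne w := by
  unfold gFrom gList
  rw [List.range_eq_range']
  congr 1

lemma gFrom_ge (w : W) {i : ℕ} (h : γword.length * cs.length w ≤ i) :
    gFrom cs γword hne w i = [] := by
  unfold gFrom
  rw [show γword.length * cs.length w - i = 0 by omega]
  rfl

lemma gFrom_succ (w : W) {i : ℕ} (h : i < γword.length * cs.length w) :
    gFrom cs γword hne w i =
      (if takesb cs γword hne w i = true then [i] else []) ++ gFrom cs γword hne w (i + 1) := by
  unfold gFrom
  rw [show γword.length * cs.length w - i = (γword.length * cs.length w - (i + 1)) + 1 by omega,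
    List.range'_succ, List.filter_cons]
  by_cases hc : takesb cs γword hne w i = true <;> simp [hc]

lemma gFrom_pairwise (w : W) (i : ℕ) : List.Pairwise (· < ·) (gFrom cs γword hne w i) :=
  List.Pairwise.filter _ (pairwise_lt_range' _ _)

lemma gFrom_mem (w : W) {i j : ℕ} (h : j ∈ gFrom cs γword hne w i) :
    i ≤ j ∧ takesb cs γword hne w j = true := by
  unfold gFrom at h
  rw [List.mem_filter, mem_range'_iff] at h
  exact ⟨h.1.1, h.2⟩

lemma gFrom_empty_of_one (w : W) {i : ℕ} (h : Drem cs γword hne w i = 1) :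
    gFrom cs γword hne w i = [] := by
  unfold gFrom
  rw [List.filter_eq_nil_iff]
  intro j hj
  rw [mem_range'_iff] at hj
  intro htk
  have h1 : Drem cs γword hne w j = 1 := Drem_one_of cs γword hne w hj.1 h
  have := takes_lt cs γword hne htk
  rw [h1] at this
  simp [cs.length_simple] at this

/-- Greedy prefix: the product and length of the greedy word up to `N`. -/
lemma greedy_prefix (w : W) (N : ℕ) :
    cs.wordProd (((List.range N).filter (takesb cs γword hne w)).map (gammaLetter γword hne))
        = w * (Drem cs γword hne w N)⁻¹ ∧
      ((List.range N).filter (takesb cs γword hne w)).length + ℓ (Drem cs γword hne w N) = ℓ w := by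
  induction N with
  | zero => simp [Drem_zero]
  | succ N ih =>
      rw [List.range_succ, List.filter_append]
      by_cases hc : takesb cs γword hne w N = true
      · have hfil : (List.filter (takesb cs γword hne w) [N]) = [N] := by simp [hc]
        rw [hfil, List.map_append, cs.wordProd_append]
        have hlt := takes_lt cs γword hne hc
        have hlen : ℓ (cs.simple (gammaLetter γword hne N) * Drem cs γword hne w N) + 1
            = ℓ (Drem cs γword hne w N) := by
          rcases cs.length_simple_mul (Drem cs γword hne w N) (gammaLetter γword hne N)
            with h' | h' <;> omega
        constructor
        · rw [ih.1, Drem_succ_takes cs γword hne hc]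
          simp only [List.map_cons, List.map_nil]
          rw [cs.wordProd_singleton, mul_inv_rev, cs.inv_simple, ← mul_assoc]
        · rw [List.length_append, Drem_succ_takes cs γword hne hc]
          simp only [List.length_singleton]
          omega
      · have hfil : (List.filter (takesb cs γword hne w) [N]) = [] := by
          simp [List.filter_cons, hc]
        rw [hfil, List.append_nil, Drem_succ_not_takes cs γword hne hc]
        exact ih

lemma gList_prod (hγ : ∀ b : B, b ∈ γword) (w : W) :
    cs.wordProd ((gList cs γword hne w).map (gammaLetter γword hne)) = w := by
  have h := (greedy_prefix cs γword hne w (γword.length * ℓ w)).1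
  rw [Drem_final cs γword hne hγ w] at h
  simpa [gList] using h

lemma gList_length (hγ : ∀ b : B, b ∈ γword) (w : W) :
    (gList cs γword hne w).length = ℓ w := by
  have h := (greedy_prefix cs γword hne w (γword.length * ℓ w)).2
  rw [Drem_final cs γword hne hγ w] at h
  simpa [gList] using h

lemma gList_reduced (hγ : ∀ b : B, b ∈ γword) (w : W) :
    cs.IsReduced ((gList cs γword hne w).map (gammaLetter γword hne)) := by
  unfold CoxeterSystem.IsReduced
  rw [gList_prod cs γword hne hγ w, List.length_map, gList_length cs γword hne hγ w]


lemma master (hγ : ∀ b : B, b ∈ γword) (w : W) :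
    ∀ (μ : ℕ) (lA : List ℕ) (i : ℕ),
    (lA.map (fun x => x + 1 - i)).sum ≤ μ →
    lA.Pairwise (· < ·) → (∀ x ∈ lA, i ≤ x) →
    cs.wordProd (lA.map (gammaLetter γword hne)) = Drem cs γword hne w i →
    cs.IsReduced (lA.map (gammaLetter γword hne)) →
    gFrom cs γword hne w i = lA ∨ List.Lex (· < ·) (gFrom cs γword hne w i) lA := by
  intro μ
  induction μ with
  | zero =>
      intro lA i hμ hpair hbound hπ hred
      match lA with
      | [] =>
          left
          apply gFrom_empty_of_one
          simp only [List.map_nil, cs.wordProd_nil] at hπ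
          exact hπ.symm
      | (a :: lA') =>
          exfalso
          have ha : i ≤ a := hbound a List.mem_cons_self
          simp only [List.map_cons, List.sum_cons] at hμ
          omega
  | succ μ ih =>
      intro lA i hμ hpair hbound hπ hred
      match lA with
      | [] =>
          left
          apply gFrom_empty_of_one
          simp only [List.map_nil, cs.wordProd_nil] at hπ
          exact hπ.symm
      | (a :: lA') =>
          have ha : i ≤ a := hbound a List.mem_cons_self
          by_cases hti : takesb cs γword hne w i = true
          · have hiN : i < γword.length * ℓ w := takes_imp_lt cs γword hne hγ w hti
            have hgf : gFrom cs γword hne w i = i :: gFrom cs γword hne w (i + 1) := by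
              rw [gFrom_succ cs γword hne w hiN, if_pos hti, List.singleton_append]
            by_cases hai : a = i
            · subst hai
              have hπ' : cs.wordProd (lA'.map (gammaLetter γword hne))
                  = Drem cs γword hne w (a + 1) := by
                simp only [List.map_cons, cs.wordProd_cons] at hπ
                rw [Drem_succ_takes cs γword hne hti, ← hπ, ← mul_assoc,
                  cs.simple_mul_simple_self, one_mul]
              have hred' : cs.IsReduced (lA'.map (gammaLetter γword hne)) := by
                have hd := CoxeterSystem.IsReduced.drop (ω := (a :: lA').map (gammaLetter γword hne)) hred 1
                simpa using hd
              have hμ' : (lA'.map (fun x => x + 1 - (a + 1))).sum ≤ μ := by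
                simp only [List.map_cons, List.sum_cons] at hμ
                have hpt : (lA'.map (fun x => x + 1 - (a + 1))).sum
                    ≤ (lA'.map (fun x => x + 1 - a)).sum :=
                  List.sum_le_sum (fun x _ => by omega)
                omega
              have hb' : ∀ x ∈ lA', a + 1 ≤ x := fun x hx =>
                List.rel_of_pairwise_cons hpair hx
              rcases ih lA' (a + 1) hμ' (List.Pairwise.of_cons hpair) hb' hπ' hred' with
                heq | hlex
              · left; rw [hgf, heq]
              · right; rw [hgf]; exact List.Lex.cons hlex
            · right
              rw [hgf]
              exact List.Lex.rel (by omega)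
          · by_cases hai : a = i
            · exfalso
              subst hai
              have hπ' : cs.wordProd (lA'.map (gammaLetter γword hne))
                  = cs.simple (gammaLetter γword hne a) * Drem cs γword hne w a := by
                simp only [List.map_cons, cs.wordProd_cons] at hπ
                rw [← hπ, ← mul_assoc, cs.simple_mul_simple_self, one_mul]
              have hlen1 : ℓ (Drem cs γword hne w a) = lA'.length + 1 := by
                unfold CoxeterSystem.IsReduced at hred
                rw [hπ] at hred
                simpa using hred
              have hlen2 : ℓ (cs.simple (gammaLetter γword hne a) * Drem cs γword hne w a)
                  ≤ lA'.length := by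
                rw [← hπ']
                calc ℓ (cs.wordProd (lA'.map (gammaLetter γword hne)))
                    ≤ (lA'.map (gammaLetter γword hne)).length := cs.length_wordProd_le _
                _ = lA'.length := List.length_map _
              apply hti
              unfold takesb
              rw [decide_eq_true_iff]
              omega
            · have hia : i < a := by omega
              by_cases hiN : i < γword.length * ℓ w
              · have hgf : gFrom cs γword hne w i = gFrom cs γword hne w (i + 1) := by
                  rw [gFrom_succ cs γword hne w hiN, if_neg hti, List.nil_append]
                have hπ' : cs.wordProd ((a :: lA').map (gammaLetter γword hne))
                    = Drem cs γword hne w (i + 1) := by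
                  rw [Drem_succ_not_takes cs γword hne hti, hπ]
                have hb' : ∀ x ∈ (a :: lA'), i + 1 ≤ x := by
                  intro x hx
                  rcases List.mem_cons.mp hx with rfl | hx'
                  · omega
                  · have := List.rel_of_pairwise_cons hpair hx'
                    omega
                have hμ' : ((a :: lA').map (fun x => x + 1 - (i + 1))).sum ≤ μ := by
                  simp only [List.map_cons, List.sum_cons] at hμ ⊢
                  have hpt : (lA'.map (fun x => x + 1 - (i + 1))).sum
                      ≤ (lA'.map (fun x => x + 1 - i)).sum :=
                    List.sum_le_sum (fun x _ => by omega)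
                  omega
                rw [hgf]
                exact ih (a :: lA') (i + 1) hμ' hpair hb' hπ' hred
              · exfalso
                have h1 : Drem cs γword hne w i = 1 :=
                  Drem_one_ge cs γword hne hγ w (by omega)
                rw [h1] at hπ
                unfold CoxeterSystem.IsReduced at hred
                rw [hπ] at hred
                simp at hred


/-- The greedy position set. -/
noncomputable def Gfin (w : W) : Finset ℕ := (gList cs γword hne w).toFinset

lemma gList_pairwise (w : W) : (gList cs γword hne w).Pairwise (· < ·) :=
  List.Pairwise.filter _ List.pairwise_lt_range

lemma sort_Gfin (w : W) :
    (Gfin cs γword hne w).sort (· ≤ ·) = gList cs γword hne w := by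
  unfold Gfin
  exact (List.toFinset_sort (r := (· ≤ ·)) ((gList_pairwise cs γword hne w).imp ne_of_lt)).mpr
    ((gList_pairwise cs γword hne w).imp le_of_lt)

lemma posWord_Gfin (w : W) :
    posWord γword hne (Gfin cs γword hne w)
      = (gList cs γword hne w).map (gammaLetter γword hne) := by
  unfold posWord
  rw [sort_Gfin]

lemma Gfin_valid (hγ : ∀ b : B, b ∈ γword) (w : W) :
    cs.wordProd (posWord γword hne (Gfin cs γword hne w)) = w ∧
      cs.IsReduced (posWord γword hne (Gfin cs γword hne w)) := by
  rw [posWord_Gfin]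
  exact ⟨gList_prod cs γword hne hγ w, gList_reduced cs γword hne hγ w⟩

lemma Gfin_min (hγ : ∀ b : B, b ∈ γword) (w : W) (A : Finset ℕ)
    (h1 : cs.wordProd (posWord γword hne A) = w)
    (h2 : cs.IsReduced (posWord γword hne A)) :
    Gfin cs γword hne w = A ∨
      List.Lex (· < ·) ((Gfin cs γword hne w).sort (· ≤ ·)) (A.sort (· ≤ ·)) := by
  have hsorted : (A.sort (· ≤ ·)).Pairwise (· < ·) := List.sortedLT_iff_pairwise.mp (Finset.sortedLT_sort A)
  have hbound : ∀ x ∈ A.sort (· ≤ ·), 0 ≤ x := fun x _ => Nat.zero_le x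
  have hπ : cs.wordProd ((A.sort (· ≤ ·)).map (gammaLetter γword hne))
      = Drem cs γword hne w 0 := by
    rw [Drem_zero]
    exact h1
  have hm := master cs γword hne hγ w (((A.sort (· ≤ ·)).map (fun x => x + 1 - 0)).sum)
    (A.sort (· ≤ ·)) 0 le_rfl hsorted hbound hπ h2
  rw [gFrom_zero] at hm
  rcases hm with heq | hlex
  · left
    have hA : Finset.sort (Gfin cs γword hne w) (· ≤ ·) = Finset.sort A (· ≤ ·) := by
      rw [sort_Gfin]
      exact heq
    apply Finset.ext
    intro x
    constructor
    · intro hx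
      have hx1 : x ∈ Finset.sort (Gfin cs γword hne w) (· ≤ ·) := (Finset.mem_sort _).mpr hx
      rw [hA] at hx1
      exact (Finset.mem_sort _).mp hx1
    · intro hx
      have hx1 : x ∈ Finset.sort A (· ≤ ·) := (Finset.mem_sort _).mpr hx
      rw [← hA] at hx1
      exact (Finset.mem_sort _).mp hx1
  · right
    rw [sort_Gfin]
    exact hlex

lemma drem_weak (u v : W) (huv : ℓ v = ℓ u + ℓ (u⁻¹ * v)) :
    ∀ i, ℓ (Drem cs γword hne v i) = ℓ (Drem cs γword hne u i)
        + ℓ ((Drem cs γword hne u i)⁻¹ * Drem cs γword hne v i)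
      ∧ (takesb cs γword hne u i = true → takesb cs γword hne v i = true) := by
  have key : ∀ i, ℓ (Drem cs γword hne v i) = ℓ (Drem cs γword hne u i)
      + ℓ ((Drem cs γword hne u i)⁻¹ * Drem cs γword hne v i) := by
    intro i
    induction i with
    | zero => rw [Drem_zero, Drem_zero]; exact huv
    | succ i ih =>
        by_cases htu : takesb cs γword hne u i = true
        · have hlift := descent_lift cs ih (takes_lt cs γword hne htu)
          have htv : takesb cs γword hne v i = true := by
            unfold takesb
            rw [decide_eq_true_iff]
            exact hlift.1
          rw [Drem_succ_takes cs γword hne htu, Drem_succ_takes cs γword hne htv]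
          exact hlift.2
        · by_cases htv : takesb cs γword hne v i = true
          · have hnl := nondescent_lift cs ih
              (by
                intro hcon
                apply htu
                unfold takesb
                rw [decide_eq_true_iff]
                exact hcon)
              (takes_lt cs γword hne htv)
            rw [Drem_succ_not_takes cs γword hne htu, Drem_succ_takes cs γword hne htv]
            exact hnl
          · rw [Drem_succ_not_takes cs γword hne htu, Drem_succ_not_takes cs γword hne htv]
            exact ih
  intro i
  refine ⟨key i, ?_⟩
  intro htu
  have hlift := descent_lift cs (key i) (takes_lt cs γword hne htu)
  unfold takesb
  rw [decide_eq_true_iff]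
  exact hlift.1

end Greedy

end Stmt12Aux


namespace Stmt12Aux

variable {B W : Type*} [Group W] [DecidableEq W] {M : CoxeterMatrix B} (cs : CoxeterSystem M W)
  (γword : List B) (hne : γword ≠ [])

lemma alpha_eq (hγ : ∀ b : B, b ∈ γword) (α : W → Finset ℕ)
    (hα : IsSortingMap cs γword hne α) (w : W) : α w = Gfin cs γword hne w := by
  obtain ⟨⟨hprod, hredα⟩, hmin⟩ := hα w
  have hval := Gfin_valid cs γword hne hγ w
  rcases hmin (Gfin cs γword hne w) hval.1 hval.2 with heq | hlex1
  · exact heq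
  rcases Gfin_min cs γword hne hγ w (α w) hprod hredα with heq2 | hlex2
  · exact heq2.symm
  · exact absurd hlex2 (asymm hlex1)

end Stmt12Aux

/-- If `u ≤ v` in right weak order, then the position set of the `γ`-sorting word of `u`
is contained in that of `v`. -/
theorem stmt12 {B W : Type*} [Finite B] [Group W] {M : CoxeterMatrix B}
    (cs : CoxeterSystem M W)
    (γword : List B) (hne : γword ≠ [])
    (hγ : γword.Nodup ∧ ∀ b : B, b ∈ γword)
    (α : W → Finset ℕ) (hα : IsSortingMap cs γword hne α)
    (u v : W) (huv : WeakLE cs u v) :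
    α u ⊆ α v := by
  letI : DecidableEq W := Classical.decEq W
  obtain ⟨hnodup, hmemγ⟩ := hγ
  unfold WeakLE at huv
  intro x hx
  rw [Stmt12Aux.alpha_eq cs γword hne hmemγ α hα u] at hx
  rw [Stmt12Aux.alpha_eq cs γword hne hmemγ α hα v]
  unfold Stmt12Aux.Gfin Stmt12Aux.gList at hx ⊢
  rw [List.mem_toFinset, List.mem_filter, List.mem_range] at hx
  rw [List.mem_toFinset, List.mem_filter, List.mem_range]
  obtain ⟨hxr, hxt⟩ := hx
  have hmono := Stmt12Aux.drem_weak cs γword hne u v huv x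
  refine ⟨?_, hmono.2 hxt⟩
  have hlen : cs.length u ≤ cs.length v := by omega
  have hmul : γword.length * cs.length u ≤ γword.length * cs.length v :=
    Nat.mul_le_mul_left _ hlen
  omega
end

section
/- Let C_γ be the Cambrian semilattice (the subposet of weak order on γ-sortable elements, which is a sub-meet-semilattice) with the edge-labeling λ_γ(u,v) = min(α_γ(v) \ α_γ(u)) on covering relations. Then for u ≤ v in C_γ, setting i₀ = min(α_γ(v) \ α_γ(u)): (i) the label i₀ appears on every maximal chain of [u,v] in C_γ; (ii) the labels along any maximal chain of [u,v] in C_γ are pairwise distinct. -/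
/-- Covering relation of the Cambrian semilattice `C_γ` (the `γ`-sortable elements
under weak order): `u ⋖_γ v` with no sortable element strictly between. -/
def CovC {W : Type*} (Sortable : W → Prop) (wle : W → W → Prop) (u v : W) : Prop :=
  Sortable u ∧ Sortable v ∧ wle u v ∧ u ≠ v ∧
    ∀ z : W, Sortable z → wle u z → wle z v → z = u ∨ z = v

/-- `c` is a maximal (saturated) chain of the interval `[u,v]_γ` in the Cambrian
semilattice. -/
def MaxChainC {W : Type*} (Sortable : W → Prop) (wle : W → W → Prop)
    (u v : W) (c : List W) : Prop :=
  c.Chain' (CovC Sortable wle) ∧ c.head? = some u ∧ c.getLast? = some v ∧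
    ∀ z ∈ c, Sortable z

/-- The label sequence of a chain. -/
def labelSeqC {W : Type*} (lab : W → W → ℕ) (c : List W) : List ℕ :=
  List.zipWith lab c c.tail

/-- The Cambrian edge-labeling `λ_γ(u,v) = min (α_γ(v) \ α_γ(u))`. -/
def cambLabel {W : Type*} (α : W → Finset ℕ) (u v : W) : ℕ :=
  WithTop.untopD 0 (α v \ α u).min


open CoxeterSystem List

namespace StmtAux

set_option linter.unusedSectionVars false

open scoped Classical

variable {B W : Type*} [Group W] {M : CoxeterMatrix B} (cs : CoxeterSystem M W)

local prefix:100 "s" => cs.simple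
local prefix:100 "π" => cs.wordProd
local prefix:100 "ℓ" => cs.length

lemma conj_conj (i : B) (t : W) : s i * (s i * t * s i) * s i = t := by
  rw [← mul_assoc, ← mul_assoc, cs.simple_mul_simple_self, one_mul, mul_assoc,
    cs.simple_mul_simple_self, mul_one]

lemma simple_conj_eq_simple_iff (i : B) (t : W) :
    s i * t * s i = s i ↔ t = s i := by
  constructor
  · intro h
    calc t = s i * (s i * t * s i) * s i := (conj_conj cs i t).symm
      _ = s i := by rw [h, cs.simple_mul_simple_cancel_right]
  · rintro rfl
    rw [cs.simple_mul_simple_self, one_mul]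

/-- The sign-flip map on `W × ZMod 2` associated to a simple reflection. -/
noncomputable def phiFun (i : B) : W × ZMod 2 → W × ZMod 2 :=
  fun p => (s i * p.1 * s i, p.2 + if p.1 = s i then 1 else 0)

lemma phiFun_involutive (i : B) : Function.Involutive (phiFun cs i) := by
  rintro ⟨t, ε⟩
  simp only [phiFun]
  refine Prod.ext (conj_conj cs i t) ?_
  simp only [simple_conj_eq_simple_iff]
  rw [add_assoc]
  split_ifs with h
  · rw [(by decide : (1 : ZMod 2) + 1 = 0), add_zero]
  · rw [add_zero, add_zero]

/-- The permutation of `W × ZMod 2` associated to a simple reflection. -/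
noncomputable def phi (i : B) : Equiv.Perm (W × ZMod 2) := (phiFun_involutive cs i).toPerm

lemma phi_apply (i : B) (t : W) (ε : ZMod 2) :
    phi cs i (t, ε) = (s i * t * s i, ε + if t = s i then 1 else 0) := rfl

lemma phi_liftable : M.IsLiftable (phi cs) := by
  intro i j
  set a : W := s i * s j with ha
  have hainv : a⁻¹ = s j * s i := by
    rw [ha, mul_inv_rev, cs.inv_simple, cs.inv_simple]
  have h2 : s j * a * s j = a⁻¹ := by
    rw [ha, hainv, ← mul_assoc, cs.simple_mul_simple_cancel_right]
  have hrelz : ∀ k : ℤ, s j * a ^ k = a ^ (-k) * s j := by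
    intro k
    have hc : (s j * a * (s j)⁻¹) ^ k = s j * a ^ k * (s j)⁻¹ := conj_zpow
    rw [cs.inv_simple, h2] at hc
    calc s j * a ^ k = (s j * a ^ k * s j) * s j := (cs.simple_mul_simple_cancel_right j).symm
      _ = a⁻¹ ^ k * s j := by rw [← hc]
      _ = a ^ (-k) * s j := by rw [inv_zpow, ← zpow_neg]
  set f : W → ℕ → ZMod 2 := fun t e => if t = a ^ (-(e:ℤ)) * s j then 1 else 0 with hf
  have main : ∀ q : ℤ, a * (a ^ q * s j) * a⁻¹ = a ^ (q + 2) * s j := by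
    intro q
    have h1 : s j * a ^ (-1 : ℤ) = a ^ (1 : ℤ) * s j := by
      have := hrelz (-1); simpa using this
    calc a * (a ^ q * s j) * a⁻¹ = a ^ (q + 1) * (s j * a ^ (-1 : ℤ)) := by group
      _ = a ^ (q + 1) * (a ^ (1 : ℤ) * s j) := by rw [h1]
      _ = a ^ (q + 2) * s j := by group
  have key : ∀ (p : ℤ) (t : W), (a * t * a⁻¹ = a ^ p * s j) ↔ (t = a ^ (p - 2) * s j) := by
    intro p t
    constructor
    · intro h
      have hmain : a * (a ^ (p - 2) * s j) * a⁻¹ = a ^ p * s j := by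
        rw [main (p - 2)]; ring_nf
      have h3 : a * t * a⁻¹ = a * (a ^ (p - 2) * s j) * a⁻¹ := by rw [h, hmain]
      calc t = a⁻¹ * (a * t * a⁻¹) * a := by group
        _ = a⁻¹ * (a * (a ^ (p-2) * s j) * a⁻¹) * a := by rw [h3]
        _ = a ^ (p - 2) * s j := by group
    · rintro rfl
      rw [main (p - 2)]; ring_nf
  have pow_formula : ∀ (k : ℕ) (t : W) (ε : ZMod 2),
      ((phi cs i * phi cs j) ^ k) (t, ε) =
        (a ^ (k : ℤ) * t * (a ^ (k : ℤ))⁻¹, ε + ∑ e ∈ Finset.range (2 * k), f t e) := by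
    intro k
    induction k with
    | zero => intro t ε; simp
    | succ k ih =>
      intro t ε
      rw [pow_succ]
      have hψ : (phi cs i * phi cs j) (t, ε) = (a * t * a⁻¹, ε + (f t 0 + f t 1)) := by
        show phi cs i (phi cs j (t, ε)) = _
        rw [phi_apply, phi_apply]
        refine Prod.ext ?_ ?_
        · show s i * (s j * t * s j) * s i = a * t * a⁻¹
          rw [ha, hainv]; group
        · show ε + (if t = s j then 1 else 0) + (if s j * t * s j = s i then 1 else 0) = _
          have e0 : (t = s j) ↔ (t = a ^ (-(0:ℕ) : ℤ) * s j) := by norm_num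
          have hpow1 : a ^ (-(1:ℕ) : ℤ) = s j * s i := by
            push_cast
            rw [zpow_neg_one, hainv]
          have e1 : (s j * t * s j = s i) ↔ (t = a ^ (-(1:ℕ) : ℤ) * s j) := by
            rw [hpow1]
            constructor
            · intro h
              calc t = s j * (s j * t * s j) * s j := (conj_conj cs j t).symm
                _ = s j * s i * s j := by rw [h]
            · rintro rfl
              exact conj_conj cs j (s i)
          rw [if_congr e0 rfl rfl, if_congr e1 rfl rfl, add_assoc]
      rw [Equiv.Perm.mul_apply, hψ, ih]
      refine Prod.ext ?_ ?_
      · show (a ^ (k:ℤ)) * (a * t * a⁻¹) * (a ^ (k:ℤ))⁻¹ = a ^ ((k+1 : ℕ):ℤ) * t * (a ^ ((k+1 : ℕ):ℤ))⁻¹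
        push_cast
        group
      · show (ε + (f t 0 + f t 1)) + (∑ e ∈ Finset.range (2 * k), f (a * t * a⁻¹) e) = ε + ∑ e ∈ Finset.range (2 * (k+1)), f t e
        have hshift : ∀ e : ℕ, f (a * t * a⁻¹) e = f t (e + 2) := by
          intro e
          simp only [hf]
          refine if_congr ?_ rfl rfl
          rw [key (-(e:ℤ)) t]
          have : a ^ (-(e:ℤ) - 2) = a ^ (-((e + 2 : ℕ) : ℤ)) := by
            congr 1
            push_cast
            ring
          rw [this]
        have hsplit : ∑ e ∈ Finset.range (2 * (k+1)), f t e
            = (∑ e ∈ Finset.range (2*k), f t (e + 2)) + f t 1 + f t 0 := by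
          have h1 : 2 * (k + 1) = (2 * k + 1) + 1 := by ring
          rw [h1, Finset.sum_range_succ', Finset.sum_range_succ']
        simp only [hshift]
        rw [hsplit]
        ring
  have ham : a ^ (M i j) = 1 := cs.simple_mul_simple_pow i j
  have h1 : a ^ ((M i j : ℕ) : ℤ) = 1 := by rw [zpow_natCast]; exact ham
  refine Equiv.ext ?_
  rintro ⟨t, ε⟩
  rw [pow_formula (M i j) t ε]
  have hsum0 : ∑ e ∈ Finset.range (2 * M i j), f t e = 0 := by
    rw [two_mul, Finset.sum_range_add]
    have hper : ∀ e ∈ Finset.range (M i j), f t (M i j + e) = f t e := by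
      intro e _
      simp only [hf]
      refine if_congr ?_ rfl rfl
      have hexp : a ^ (-((M i j + e : ℕ)) : ℤ) = a ^ (-(e:ℤ)) := by
        push_cast
        rw [neg_add, zpow_add, zpow_neg, h1, inv_one, one_mul]
      rw [hexp]
    rw [Finset.sum_congr rfl hper]
    exact CharTwo.add_self_eq_zero _
  rw [h1, hsum0]
  simp

/-- The sign homomorphism `W →* Perm (W × ZMod 2)`. -/
noncomputable def rho : W →* Equiv.Perm (W × ZMod 2) := cs.lift ⟨phi cs, phi_liftable cs⟩

lemma rho_simple (i : B) : rho cs (s i) = phi cs i :=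
  cs.lift_apply_simple (phi_liftable cs) i

/-- Parity of the number of occurrences of `t` in the right inversion sequence of `ω`. -/
noncomputable def flips (ω : List B) (t : W) : ZMod 2 :=
  ((cs.rightInvSeq ω).map (fun x => if x = t then (1 : ZMod 2) else 0)).sum

lemma flips_nil (t : W) : flips cs [] t = 0 := rfl

lemma flips_cons (i : B) (ω : List B) (t : W) :
    flips cs (i :: ω) t
      = (if (π ω)⁻¹ * s i * π ω = t then 1 else 0) + flips cs ω t := by
  simp [flips, rightInvSeq]

lemma rho_wordProd (ω : List B) (t : W) (ε : ZMod 2) :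
    rho cs (π ω) (t, ε) = (π ω * t * (π ω)⁻¹, ε + flips cs ω t) := by
  induction ω generalizing t ε with
  | nil => simp [flips_nil]
  | cons i ω ih =>
    rw [wordProd_cons, map_mul, Equiv.Perm.mul_apply, ih, rho_simple, phi_apply]
    refine Prod.ext ?_ ?_
    · show s i * (π ω * t * (π ω)⁻¹) * s i = (s i * π ω) * t * (s i * π ω)⁻¹
      rw [mul_inv_rev, cs.inv_simple]
      group
    · show ε + flips cs ω t + (if π ω * t * (π ω)⁻¹ = s i then 1 else 0)
        = ε + flips cs (i :: ω) t
      rw [flips_cons]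
      have hiff : (π ω * t * (π ω)⁻¹ = s i) ↔ ((π ω)⁻¹ * s i * π ω = t) := by
        constructor
        · rintro h
          rw [← h]; group
        · rintro rfl
          group
      rw [if_congr hiff rfl rfl]
      ring

lemma flips_eq_of_wordProd_eq {ω ω' : List B} (h : π ω = π ω') (t : W) :
    flips cs ω t = flips cs ω' t := by
  have h1 := rho_wordProd cs ω t 0
  have h2 := rho_wordProd cs ω' t 0
  rw [h, h2] at h1
  have := congrArg Prod.snd h1
  simpa using this.symm

lemma sum_indicator_eq_one {l : List W} (hnd : l.Nodup) {x : W} (hx : x ∈ l) :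
    (l.map (fun y => if y = x then (1 : ZMod 2) else 0)).sum = 1 := by
  induction l with
  | nil => simp at hx
  | cons a l ih =>
    rcases List.mem_cons.mp hx with rfl | hx
    · have hnot : x ∉ l := (List.nodup_cons.mp hnd).1
      have : (l.map (fun y => if y = x then (1 : ZMod 2) else 0)).sum = 0 := by
        rw [List.sum_eq_zero]
        intro z hz
        obtain ⟨y, hy, rfl⟩ := List.mem_map.mp hz
        simp only [if_neg (fun h : y = x => hnot (h ▸ hy))]
      simp [this]
    · have ha : a ≠ x := fun h => (List.nodup_cons.mp hnd).1 (h ▸ hx)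
      rw [List.map_cons, List.sum_cons, if_neg ha, zero_add]
      exact ih (List.nodup_cons.mp hnd).2 hx

lemma sum_indicator_eq_zero {l : List W} {x : W} (hx : x ∉ l) :
    (l.map (fun y => if y = x then (1 : ZMod 2) else 0)).sum = 0 := by
  rw [List.sum_eq_zero]
  intro z hz
  obtain ⟨y, hy, rfl⟩ := List.mem_map.mp hz
  simp only [if_neg (fun h : y = x => hx (h ▸ hy))]

lemma flips_reverse_eq_sum_leftInvSeq (ω : List B) (t : W) :
    flips cs ω.reverse t
      = ((cs.leftInvSeq ω).map (fun y => if y = t then (1 : ZMod 2) else 0)).sum := by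
  have h : cs.leftInvSeq ω = (cs.rightInvSeq ω.reverse).reverse := by
    have := cs.leftInvSeq_reverse ω.reverse
    rw [List.reverse_reverse] at this
    rw [this]
  rw [h, flips, List.map_reverse, List.sum_reverse]

lemma mem_leftInvSeq_of_isLeftDescent {ω : List B} (hω : cs.IsReduced ω) {i : B}
    (h : ℓ (s i * π ω) < ℓ (π ω)) : s i ∈ cs.leftInvSeq ω := by
  obtain ⟨τ, hτred, hτ⟩ := cs.exists_reduced_word' (s i * π ω)
  have hlen' : ℓ (s i * π ω) + 1 = ℓ (π ω) :=
    (cs.length_simple_mul (π ω) i).resolve_left (by omega)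
  have hprod : π (i :: τ) = π ω := by
    rw [wordProd_cons, ← hτ, cs.simple_mul_simple_cancel_left]
  have hred : cs.IsReduced (i :: τ) := by
    show ℓ (π (i :: τ)) = (i :: τ).length
    rw [hprod, List.length_cons, ← hτred, ← hτ, hlen']
  have hmem : s i ∈ cs.leftInvSeq (i :: τ) := by
    have : cs.leftInvSeq (i :: τ) = s i :: List.map (MulAut.conj (s i)) (cs.leftInvSeq τ) := rfl
    rw [this]
    exact List.mem_cons_self
  have hnd : (cs.leftInvSeq (i :: τ)).Nodup := hred.nodup_leftInvSeq
  have h1 : flips cs (i :: τ).reverse (s i) = 1 := by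
    rw [flips_reverse_eq_sum_leftInvSeq]
    exact sum_indicator_eq_one hnd hmem
  have h2 : flips cs ω.reverse (s i) = 1 := by
    rw [← h1]
    refine flips_eq_of_wordProd_eq cs ?_ _
    rw [cs.wordProd_reverse, cs.wordProd_reverse, hprod]
  by_contra hns
  have h0 : flips cs ω.reverse (s i) = 0 := by
    rw [flips_reverse_eq_sum_leftInvSeq]
    exact sum_indicator_eq_zero hns
  rw [h0] at h2
  exact (by decide : (0 : ZMod 2) ≠ 1) h2

/-- The (left) exchange property. -/
lemma exchange_left {ω : List B} (hω : cs.IsReduced ω) {i : B}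
    (h : ℓ (s i * π ω) < ℓ (π ω)) :
    ∃ j, j < ω.length ∧ s i * π ω = π (ω.eraseIdx j) := by
  obtain ⟨j, hj, hget⟩ := List.getElem_of_mem (mem_leftInvSeq_of_isLeftDescent cs hω h)
  have hjl : j < ω.length := by
    rw [← cs.length_leftInvSeq ω]
    exact hj
  refine ⟨j, hjl, ?_⟩
  have := cs.getD_leftInvSeq_mul_wordProd ω j
  rwa [List.getD_eq_getElem _ _ hj, hget] at this

/-! ### Weak order lemmas -/

lemma length_simple_mul_of_descent {w : W} {i : B} (h : ℓ (s i * w) < ℓ w) :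
    ℓ (s i * w) + 1 = ℓ w :=
  (cs.length_simple_mul w i).resolve_left (by omega)

/-- Descents propagate up the weak order. -/
lemma descent_mono {u v : W} {i : B} (huv : ℓ v = ℓ u + ℓ (u⁻¹ * v))
    (hu : ℓ (s i * u) < ℓ u) : ℓ (s i * v) < ℓ v := by
  have h1 : ℓ (s i * u) + 1 = ℓ u := length_simple_mul_of_descent cs hu
  have h2 : ℓ (s i * v) ≤ ℓ (s i * u) + ℓ (u⁻¹ * v) := by
    have := cs.length_mul_le (s i * u) (u⁻¹ * v)
    rwa [mul_assoc, mul_inv_cancel_left] at this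
  omega

/-- Covers transform along common descents (weak order). -/
lemma weakLE_simple_mul {u v : W} {i : B} (huv : ℓ v = ℓ u + ℓ (u⁻¹ * v))
    (hu : ℓ (s i * u) < ℓ u) :
    ℓ (s i * v) = ℓ (s i * u) + ℓ ((s i * u)⁻¹ * (s i * v)) := by
  have hinv : (s i * u)⁻¹ * (s i * v) = u⁻¹ * v := by
    rw [mul_inv_rev, cs.inv_simple, mul_assoc, ← mul_assoc (s i), cs.simple_mul_simple_self,
      one_mul]
  rw [hinv]
  have h1 : ℓ (s i * u) + 1 = ℓ u := length_simple_mul_of_descent cs hu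
  have h2 : ℓ (s i * v) ≤ ℓ (s i * u) + ℓ (u⁻¹ * v) := by
    have := cs.length_mul_le (s i * u) (u⁻¹ * v)
    rwa [mul_assoc, mul_inv_cancel_left] at this
  have h3 : ℓ v ≤ ℓ (s i * v) + 1 := by
    rcases cs.length_simple_mul v i with h | h <;> omega
  omega

/-- The lifting property of weak order. -/
lemma weakLE_lift {u v : W} {i : B} (huv : ℓ v = ℓ u + ℓ (u⁻¹ * v))
    (hv : ℓ (s i * v) < ℓ v) (hu : ¬ ℓ (s i * u) < ℓ u) :
    ℓ (s i * v) = ℓ u + ℓ (u⁻¹ * (s i * v)) := by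
  obtain ⟨ωu, hredu, hu'⟩ := cs.exists_reduced_word' u
  obtain ⟨ωc, hredc, hc'⟩ := cs.exists_reduced_word' (u⁻¹ * v)
  have hlenu : ωu.length = ℓ u := by rw [← hredu, ← hu']
  have hlenc : ωc.length = ℓ (u⁻¹ * v) := by rw [← hredc, ← hc']
  have hprod : π (ωu ++ ωc) = v := by
    rw [cs.wordProd_append, ← hu', ← hc', mul_inv_cancel_left]
  have hred : cs.IsReduced (ωu ++ ωc) := by
    show ℓ (π (ωu ++ ωc)) = (ωu ++ ωc).length
    rw [hprod, List.length_append, hlenu, hlenc, huv]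
  have hv' : ℓ (s i * π (ωu ++ ωc)) < ℓ (π (ωu ++ ωc)) := by rwa [hprod]
  obtain ⟨j, hj, heq⟩ := exchange_left cs hred hv'
  rw [hprod] at heq
  rw [List.length_append] at hj
  by_cases hcase : j < ωu.length
  · exfalso
    rw [List.eraseIdx_append_of_lt_length hcase] at heq
    have hsu : s i * u = π (ωu.eraseIdx j) := by
      have : s i * v * (v⁻¹ * u) = π (ωu.eraseIdx j) * π ωc * (v⁻¹ * u) := by
        rw [← cs.wordProd_append, ← heq]
      rw [mul_assoc, mul_inv_cancel_left] at this
      rw [this, ← hc', mul_assoc]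
      have : u⁻¹ * v * (v⁻¹ * u) = 1 := by group
      rw [this, mul_one]
    have hle : ℓ (s i * u) ≤ ωu.length - 1 := by
      rw [hsu]
      have := cs.length_wordProd_le (ωu.eraseIdx j)
      have hl := List.length_eraseIdx_of_lt hcase
      omega
    omega
  · push_neg at hcase
    rw [List.eraseIdx_append_of_length_le hcase] at heq
    have hjc : j - ωu.length < ωc.length := by omega
    have hcu : u⁻¹ * (s i * v) = π (ωc.eraseIdx (j - ωu.length)) := by
      rw [heq, cs.wordProd_append, ← hu', ← mul_assoc, inv_mul_cancel, one_mul]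
    have hle : ℓ (u⁻¹ * (s i * v)) ≤ ℓ (u⁻¹ * v) - 1 := by
      rw [hcu]
      have := cs.length_wordProd_le (ωc.eraseIdx (j - ωu.length))
      have hl := List.length_eraseIdx_of_lt hjc
      omega
    have hge : ℓ (s i * v) ≤ ℓ u + ℓ (u⁻¹ * (s i * v)) := by
      have := cs.length_mul_le u (u⁻¹ * (s i * v))
      rwa [← mul_assoc, mul_inv_cancel, one_mul] at this
    have h1 : ℓ (s i * v) + 1 = ℓ v := length_simple_mul_of_descent cs hv
    have h2 : ℓ (u⁻¹ * v) ≠ 0 := by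
      intro hz
      have huv1 : u⁻¹ * v = 1 := cs.length_eq_zero_iff.mp hz
      have hvu : v = u := by
        calc v = u * (u⁻¹ * v) := by rw [mul_inv_cancel_left]
          _ = u * 1 := by rw [huv1]
          _ = u := mul_one u
      rw [hvu] at hv
      exact hu hv
    omega



section Greedy

open scoped Classical

variable {B W : Type*} [Group W] {M : CoxeterMatrix B} (cs : CoxeterSystem M W)
variable (γword : List B) (hne : γword ≠ [])

local prefix:100 "s" => cs.simple
local prefix:100 "π" => cs.wordProd
local prefix:100 "ℓ" => cs.length

lemma gammaLetter_eq (i : ℕ) :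
    gammaLetter γword hne i
      = γword[i % γword.length]'(Nat.mod_lt _ (List.length_pos_iff.mpr hne)) := rfl

lemma exists_descent_pos (hall : ∀ b : B, b ∈ γword) {w : W} (hw : w ≠ 1) (N : ℕ) :
    ∃ i, N ≤ i ∧ cs.IsLeftDescent w (gammaLetter γword hne i) := by
  obtain ⟨b, hb⟩ := cs.exists_leftDescent_of_ne_one hw
  obtain ⟨k, hk, hkb⟩ := List.getElem_of_mem (hall b)
  have hn : 0 < γword.length := List.length_pos_iff.mpr hne
  refine ⟨k + γword.length * N, ?_, ?_⟩
  · calc N ≤ γword.length * N := Nat.le_mul_of_pos_left N hn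
      _ ≤ k + γword.length * N := Nat.le_add_left _ _
  · have hmod : (k + γword.length * N) % γword.length = k := by
      rw [Nat.add_mul_mod_self_left, Nat.mod_eq_of_lt hk]
    have : gammaLetter γword hne (k + γword.length * N) = b := by
      rw [gammaLetter_eq]
      simp only [hmod]
      exact hkb
    rwa [this]

/-- The first position `≥ N` of `γ^∞` whose letter is a left descent of `w`. -/
noncomputable def dpos (N : ℕ) (w : W) : ℕ :=
  if h : ∃ i, N ≤ i ∧ cs.IsLeftDescent w (gammaLetter γword hne i) then Nat.find h else 0

lemma dpos_spec (hall : ∀ b : B, b ∈ γword) {w : W} (hw : w ≠ 1) (N : ℕ) :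
    N ≤ dpos cs γword hne N w
      ∧ cs.IsLeftDescent w (gammaLetter γword hne (dpos cs γword hne N w)) := by
  classical
  have h := exists_descent_pos cs γword hne hall hw N
  rw [dpos, dif_pos h]
  exact Nat.find_spec h

lemma dpos_min {w : W} (N : ℕ) {i : ℕ} (hNi : N ≤ i)
    (hd : cs.IsLeftDescent w (gammaLetter γword hne i)) : dpos cs γword hne N w ≤ i := by
  classical
  have h : ∃ i, N ≤ i ∧ cs.IsLeftDescent w (gammaLetter γword hne i) := ⟨i, hNi, hd⟩
  rw [dpos, dif_pos h]
  exact Nat.find_le ⟨hNi, hd⟩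

/-- The greedy (lexicographically first) position set of a reduced word for `w` in `γ^∞`,
using positions `≥ N` only. -/
noncomputable def greedy (hall : ∀ b : B, b ∈ γword) (N : ℕ) (w : W) : Finset ℕ :=
  if h : w = 1 then ∅
  else insert (dpos cs γword hne N w)
    (greedy hall (dpos cs γword hne N w + 1)
      (cs.simple (gammaLetter γword hne (dpos cs γword hne N w)) * w))
termination_by cs.length w
decreasing_by exact (dpos_spec cs γword hne hall h N).2

variable (hall : ∀ b : B, b ∈ γword)

lemma greedy_one (N : ℕ) : greedy cs γword hne hall N 1 = ∅ := by
  rw [greedy, dif_pos rfl]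

lemma greedy_of_ne {w : W} (hw : w ≠ 1) (N : ℕ) :
    greedy cs γword hne hall N w = insert (dpos cs γword hne N w)
      (greedy cs γword hne hall (dpos cs γword hne N w + 1)
        (cs.simple (gammaLetter γword hne (dpos cs γword hne N w)) * w)) := by
  rw [greedy, dif_neg hw]

lemma greedy_bound : ∀ (n : ℕ) {w : W}, ℓ w ≤ n → ∀ (N : ℕ),
    ∀ i ∈ greedy cs γword hne hall N w, N ≤ i := by
  intro n
  induction n with
  | zero =>
    intro w hwn N i hi
    have hw : w = 1 := cs.length_eq_zero_iff.mp (Nat.le_zero.mp hwn)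
    rw [hw, greedy_one] at hi
    simp at hi
  | succ n ih =>
    intro w hwn N i hi
    by_cases hw : w = 1
    · rw [hw, greedy_one] at hi; simp at hi
    · rw [greedy_of_ne cs γword hne hall hw N] at hi
      obtain ⟨hN, hd⟩ := dpos_spec cs γword hne hall hw N
      rcases Finset.mem_insert.mp hi with rfl | hi
      · exact hN
      · have hlen : ℓ (s (gammaLetter γword hne (dpos cs γword hne N w)) * w) ≤ n := by
          have := hd
          unfold CoxeterSystem.IsLeftDescent at this
          omega
        have := ih hlen _ i hi
        omega

/-- `sort` of the greedy set decomposes as a cons. -/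
lemma greedy_sort {w : W} (hw : w ≠ 1) (N : ℕ) :
    (greedy cs γword hne hall N w).sort (· ≤ ·)
      = dpos cs γword hne N w ::
        ((greedy cs γword hne hall (dpos cs γword hne N w + 1)
          (cs.simple (gammaLetter γword hne (dpos cs γword hne N w)) * w)).sort (· ≤ ·)) := by
  rw [greedy_of_ne cs γword hne hall hw N]
  set d := dpos cs γword hne N w
  set w' := cs.simple (gammaLetter γword hne d) * w
  have h1 : ∀ b ∈ greedy cs γword hne hall (d+1) w', d ≤ b := by
    intro b hb
    have := greedy_bound cs γword hne hall (ℓ w') le_rfl (d+1) b hb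
    omega
  have h2 : d ∉ greedy cs γword hne hall (d+1) w' := by
    intro hd
    have := greedy_bound cs γword hne hall (ℓ w') le_rfl (d+1) d hd
    omega
  exact Finset.sort_insert _ h1 h2

lemma greedy_valid : ∀ (n : ℕ) {w : W}, ℓ w ≤ n → ∀ (N : ℕ),
    cs.wordProd (posWord γword hne (greedy cs γword hne hall N w)) = w
      ∧ cs.IsReduced (posWord γword hne (greedy cs γword hne hall N w)) := by
  intro n
  induction n with
  | zero =>
    intro w hwn N
    have hw : w = 1 := cs.length_eq_zero_iff.mp (Nat.le_zero.mp hwn)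
    subst hw
    rw [greedy_one]
    constructor
    · simp [posWord]
    · show ℓ (π (posWord γword hne ∅)) = _
      simp [posWord]
  | succ n ih =>
    intro w hwn N
    by_cases hw : w = 1
    · subst hw
      rw [greedy_one]
      constructor
      · simp [posWord]
      · show ℓ (π (posWord γword hne ∅)) = _
        simp [posWord]
    · obtain ⟨hN, hd⟩ := dpos_spec cs γword hne hall hw N
      set d := dpos cs γword hne N w with hdd
      set w' := cs.simple (gammaLetter γword hne d) * w with hw'
      have hlen : ℓ w' < ℓ w := hd
      have hlen' : ℓ w' ≤ n := by omega
      obtain ⟨ihp, ihr⟩ := ih hlen' (d+1)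
      have hpos : posWord γword hne (greedy cs γword hne hall N w)
          = gammaLetter γword hne d :: posWord γword hne (greedy cs γword hne hall (d+1) w') := by
        rw [posWord, greedy_sort cs γword hne hall hw N, List.map_cons]
        rfl
      constructor
      · rw [hpos, cs.wordProd_cons, ihp, hw', cs.simple_mul_simple_cancel_left]
      · show ℓ (π (posWord γword hne (greedy cs γword hne hall N w))) = _
        rw [hpos]
        rw [cs.wordProd_cons, ihp]
        have hlw : ℓ w = ℓ w' + 1 := by
          have h := length_simple_mul_of_descent cs hd
          rw [← hw'] at h
          omega
        have hwr : ℓ w' = (posWord γword hne (greedy cs γword hne hall (d+1) w')).length := by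
          rw [← ihr, ihp]
        have : w = s (gammaLetter γword hne d) * w' := by
          rw [hw', cs.simple_mul_simple_cancel_left]
        rw [← this, List.length_cons, hlw, hwr]

lemma greedy_min : ∀ (n : ℕ) {w : W}, ℓ w ≤ n → ∀ (N : ℕ) (A : Finset ℕ),
    (∀ i ∈ A, N ≤ i) → cs.wordProd (posWord γword hne A) = w →
    cs.IsReduced (posWord γword hne A) →
    greedy cs γword hne hall N w = A ∨
      List.Lex (· < ·) ((greedy cs γword hne hall N w).sort (· ≤ ·)) (A.sort (· ≤ ·)) := by
  intro n
  induction n with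
  | zero =>
    intro w hwn N A hbound hprod hred
    have hw : w = 1 := cs.length_eq_zero_iff.mp (Nat.le_zero.mp hwn)
    subst hw
    left
    rw [greedy_one]
    have hcard : A.card = 0 := by
      have h1 : ℓ (π (posWord γword hne A)) = (posWord γword hne A).length := hred
      rw [hprod, cs.length_one] at h1
      rw [posWord, List.length_map, Finset.length_sort] at h1
      omega
    exact (Finset.card_eq_zero.mp hcard).symm
  | succ n ih =>
    intro w hwn N A hbound hprod hred
    by_cases hw : w = 1
    · subst hw
      left
      rw [greedy_one]
      have hcard : A.card = 0 := by
        have h1 : ℓ (π (posWord γword hne A)) = (posWord γword hne A).length := hred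
        rw [hprod, cs.length_one] at h1
        rw [posWord, List.length_map, Finset.length_sort] at h1
        omega
      exact (Finset.card_eq_zero.mp hcard).symm
    · -- A is nonempty
      have hAne : A.Nonempty := by
        rcases Finset.eq_empty_or_nonempty A with rfl | h
        · exfalso
          apply hw
          rw [← hprod]
          simp [posWord]
        · exact h
      set a := A.min' hAne with haa
      have haA : a ∈ A := A.min'_mem hAne
      have hNa : N ≤ a := hbound a haA
      -- sort decomposition of A
      have hsortA : A.sort (· ≤ ·) = a :: (A.erase a).sort (· ≤ ·) := by
        conv_lhs => rw [← Finset.insert_erase haA]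
        refine Finset.sort_insert _ ?_ ?_
        · intro b hb
          exact A.min'_le b (Finset.mem_of_mem_erase hb)
        · exact Finset.notMem_erase a A
      have herase_bound : ∀ i ∈ A.erase a, a + 1 ≤ i := by
        intro i hi
        have h1 : i ≠ a := Finset.ne_of_mem_erase hi
        have h2 : a ≤ i := A.min'_le i (Finset.mem_of_mem_erase hi)
        omega
      -- word decomposition
      have hposA : posWord γword hne A
          = gammaLetter γword hne a :: posWord γword hne (A.erase a) := by
        rw [posWord, hsortA, List.map_cons]
        rfl
      set w' := cs.simple (gammaLetter γword hne a) * w with hw'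
      have hprod' : cs.wordProd (posWord γword hne (A.erase a)) = w' := by
        rw [hw', ← hprod, hposA, cs.wordProd_cons, cs.simple_mul_simple_cancel_left]
      have hlenA : (posWord γword hne A).length = A.card := by
        rw [posWord, List.length_map, Finset.length_sort]
      have hlenA' : (posWord γword hne (A.erase a)).length = A.card - 1 := by
        rw [posWord, List.length_map, Finset.length_sort, Finset.card_erase_of_mem haA]
      have hlw : ℓ w = A.card := by
        have h1 : ℓ (π (posWord γword hne A)) = (posWord γword hne A).length := hred
        rw [hprod, hlenA] at h1
        exact h1
      have hcard_pos : 0 < A.card := Finset.card_pos.mpr hAne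
      have hred' : cs.IsReduced (posWord γword hne (A.erase a)) := by
        show ℓ (π (posWord γword hne (A.erase a))) = _
        rw [hprod', hlenA']
        have hub : ℓ w' ≤ A.card - 1 := by
          rw [← hprod']
          have := cs.length_wordProd_le (posWord γword hne (A.erase a))
          omega
        have hlb : ℓ w ≤ ℓ w' + 1 := by
          have : w = s (gammaLetter γword hne a) * w' := by
            rw [hw', cs.simple_mul_simple_cancel_left]
          rw [this]
          have := cs.length_simple_mul w' (gammaLetter γword hne a)
          omega
        omega
      have hdesc : cs.IsLeftDescent w (gammaLetter γword hne a) := by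
        show ℓ w' < ℓ w
        have h1 : ℓ (π (posWord γword hne (A.erase a))) = (posWord γword hne (A.erase a)).length := hred'
        rw [hprod', hlenA'] at h1
        omega
      set d := dpos cs γword hne N w with hdd
      have hd_le : d ≤ a := dpos_min cs γword hne N hNa hdesc
      obtain ⟨hNd, hdD⟩ := dpos_spec cs γword hne hall hw N
      rcases Nat.lt_or_ge d a with hda | hda
      · right
        rw [greedy_sort cs γword hne hall hw N, hsortA]
        exact List.Lex.rel hda
      · have hda' : d = a := by omega
        -- the two heads agree
        have hww' : cs.simple (gammaLetter γword hne d) * w = w' := by rw [hda', hw']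
        have hlen1 : ℓ w' ≤ n := by
          have : ℓ w' < ℓ w := hdesc
          omega
        have := ih hlen1 (a+1) (A.erase a) herase_bound hprod' hred'
        rw [greedy_sort cs γword hne hall hw N, hsortA]
        rw [greedy_of_ne cs γword hne hall hw N]
        rw [← hdd, hww', hda']
        rcases this with heq | hlex
        · left
          rw [heq, Finset.insert_erase haA]
        · right
          exact List.Lex.cons hlex

include hall in
lemma dpos_congr {w : W} (hw : w ≠ 1) {N M' : ℕ} (hNM : N ≤ M')
    (hMd : M' ≤ dpos cs γword hne N w) : dpos cs γword hne M' w = dpos cs γword hne N w := by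
  obtain ⟨hN1, hd1⟩ := dpos_spec cs γword hne hall hw N
  obtain ⟨hN2, hd2⟩ := dpos_spec cs γword hne hall hw M'
  have h1 : dpos cs γword hne M' w ≤ dpos cs γword hne N w :=
    dpos_min cs γword hne M' hMd hd1
  have h2 : dpos cs γword hne N w ≤ dpos cs γword hne M' w :=
    dpos_min cs γword hne N (le_trans hNM hN2) hd2
  omega

lemma greedy_congr {w : W} (hw : w ≠ 1) {N M' : ℕ} (hNM : N ≤ M')
    (hMd : M' ≤ dpos cs γword hne N w) :
    greedy cs γword hne hall N w = greedy cs γword hne hall M' w := by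
  rw [greedy_of_ne cs γword hne hall hw N, greedy_of_ne cs γword hne hall hw M',
    dpos_congr cs γword hne hall hw hNM hMd]

lemma greedy_mono : ∀ (n : ℕ) {u v : W}, ℓ v ≤ n →
    ℓ v = ℓ u + ℓ (u⁻¹ * v) → ∀ (N : ℕ),
    greedy cs γword hne hall N u ⊆ greedy cs γword hne hall N v := by
  intro n
  induction n with
  | zero =>
    intro u v hvn huv N
    have hu1 : ℓ u = 0 := by omega
    have : u = 1 := cs.length_eq_zero_iff.mp hu1
    rw [this, greedy_one]
    exact Finset.empty_subset _
  | succ n ih =>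
    intro u v hvn huv N
    by_cases hu : u = 1
    · rw [hu, greedy_one]
      exact Finset.empty_subset _
    · have hv : v ≠ 1 := by
        intro hv1
        apply hu
        apply cs.length_eq_zero_iff.mp
        rw [hv1, cs.length_one] at huv
        omega
      obtain ⟨hNu, hdu⟩ := dpos_spec cs γword hne hall hu N
      obtain ⟨hNv, hdv⟩ := dpos_spec cs γword hne hall hv N
      set du := dpos cs γword hne N u with hdu'
      set dv := dpos cs γword hne N v with hdv'
      -- dv ≤ du
      have hdvu : dv ≤ du :=
        dpos_min cs γword hne N hNu (descent_mono cs huv hdu)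
      rcases Nat.lt_or_ge dv du with hlt | hge
      · -- dv < du : letter dv is not a descent of u ; use the lifting lemma
        have hnd : ¬ ℓ (s (gammaLetter γword hne dv) * u) < ℓ u := by
          intro hcon
          have := dpos_min cs γword hne N hNv hcon
          omega
        have hlift : ℓ (s (gammaLetter γword hne dv) * v)
            = ℓ u + ℓ (u⁻¹ * (s (gammaLetter γword hne dv) * v)) :=
          weakLE_lift cs huv hdv hnd
        set v' := s (gammaLetter γword hne dv) * v with hv''
        have hlv : ℓ v' < ℓ v := hdv
        have hshift : greedy cs γword hne hall N u = greedy cs γword hne hall (dv + 1) u :=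
          greedy_congr cs γword hne hall hu (by omega) (by omega)
        have hsub : greedy cs γword hne hall (dv + 1) u ⊆ greedy cs γword hne hall (dv + 1) v' :=
          ih (by omega) hlift (dv + 1)
        rw [greedy_of_ne cs γword hne hall hv N, ← hdv']
        rw [hshift]
        exact hsub.trans (Finset.subset_insert _ _)
      · -- dv = du
        have hdeq : du = dv := by omega
        have hmul : ℓ (s (gammaLetter γword hne du) * v)
            = ℓ (s (gammaLetter γword hne du) * u)
              + ℓ ((s (gammaLetter γword hne du) * u)⁻¹ * (s (gammaLetter γword hne du) * v)) :=
          weakLE_simple_mul cs huv hdu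
        have hlv : ℓ (s (gammaLetter γword hne du) * v) < ℓ v := by
          rw [hdeq]; exact hdv
        have hsub : greedy cs γword hne hall (du + 1) (s (gammaLetter γword hne du) * u)
            ⊆ greedy cs γword hne hall (du + 1) (s (gammaLetter γword hne du) * v) :=
          ih (by omega) hmul (du + 1)
        rw [greedy_of_ne cs γword hne hall hu N, greedy_of_ne cs γword hne hall hv N,
          ← hdu', ← hdv', ← hdeq]
        exact Finset.insert_subset_insert _ hsub

lemma alpha_eq_greedy (α : W → Finset ℕ) (hα : IsSortingMap cs γword hne α) (w : W) :
    α w = greedy cs γword hne hall 0 w := by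
  obtain ⟨hv, hmin⟩ := hα w
  obtain ⟨hgp, hgr⟩ := greedy_valid cs γword hne hall (ℓ w) le_rfl 0
  rcases hmin (greedy cs γword hne hall 0 w) hgp hgr with heq | hlex1
  · exact heq
  · rcases greedy_min cs γword hne hall (ℓ w) le_rfl 0 (α w)
        (fun i _ => Nat.zero_le i) hv.1 hv.2 with heq | hlex2
    · exact heq.symm
    · exfalso
      exact (List.Lex.asymm (· < ·)).asymm _ _ hlex1 hlex2

include hall in
lemma alpha_mono (α : W → Finset ℕ) (hα : IsSortingMap cs γword hne α) {u v : W}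
    (huv : ℓ v = ℓ u + ℓ (u⁻¹ * v)) : α u ⊆ α v := by
  rw [alpha_eq_greedy cs γword hne hall α hα u, alpha_eq_greedy cs γword hne hall α hα v]
  exact greedy_mono cs γword hne hall (ℓ v) le_rfl huv 0

lemma alpha_inj (α : W → Finset ℕ) (hα : IsSortingMap cs γword hne α) {u v : W}
    (h : α u = α v) : u = v := by
  have h1 := (hα u).1.1
  have h2 := (hα v).1.1
  rw [← h1, ← h2, h]

end Greedy

end StmtAux


/-- Let `u ≤_γ v` in the Cambrian semilattice and `i₀ = min (α_γ(v) \ α_γ(u))`. Then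
(i) the label `i₀` appears on every maximal chain of `[u,v]_γ`, and (ii) the labels
along any maximal chain of `[u,v]_γ` are pairwise distinct. -/
theorem stmt14 {B W : Type*} [Finite B] [Group W] {M : CoxeterMatrix B}
    (cs : CoxeterSystem M W)
    (γword : List B) (hne : γword ≠ [])
    (hγ : γword.Nodup ∧ ∀ b : B, b ∈ γword)
    (α : W → Finset ℕ) (hα : IsSortingMap cs γword hne α)
    (u v : W)
    (hu : SortableVia γword.length α u) (hv : SortableVia γword.length α v)
    (huv : WeakLE cs u v) (hdiff : (α v \ α u).Nonempty) :
    ∀ c : List W,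
      MaxChainC (SortableVia γword.length α) (WeakLE cs) u v c →
      (α v \ α u).min' hdiff ∈ labelSeqC (cambLabel α) c ∧
      (labelSeqC (cambLabel α) c).Nodup := by
  classical
  have hall : ∀ b : B, b ∈ γword := hγ.2
  intro ch hc
  obtain ⟨hchain, hhead, hlast, hsort⟩ := hc
  have hcne : ch ≠ [] := by
    intro h
    rw [h] at hhead
    simp at hhead
  have hL0 : 0 < ch.length := List.length_pos_iff.mpr hcne
  set cg : ℕ → W := fun k => ch.getD k u with hcg
  have hgd : ∀ (k : ℕ) (h : k < ch.length), cg k = ch.get ⟨k, h⟩ :=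
    fun k h => List.getD_eq_getElem ch u h
  have hc0 : cg 0 = u := by
    show ch.getD 0 u = u
    rw [List.getD_eq_getElem?_getD, ← List.head?_eq_getElem?, hhead]
    rfl
  have hclast : cg (ch.length - 1) = v := by
    show ch.getD (ch.length - 1) u = v
    rw [List.getD_eq_getElem?_getD, ← List.getLast?_eq_getElem?, hlast]
    rfl
  -- the covering relations along the chain
  have hcov : ∀ k, k + 1 < ch.length →
      CovC (SortableVia γword.length α) (WeakLE cs) (cg k) (cg (k+1)) := by
    intro k hk
    rw [hgd k (by omega), hgd (k+1) hk]
    exact List.isChain_iff_getElem.mp hchain k hk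
  -- single-step monotonicity of α
  have hmono1 : ∀ k, k + 1 < ch.length → α (cg k) ⊆ α (cg (k+1)) := by
    intro k hk
    exact StmtAux.alpha_mono cs γword hne hall α hα ((hcov k hk).2.2.1)
  -- monotonicity of α along the chain
  have hmono : ∀ m j, j + m < ch.length → α (cg j) ⊆ α (cg (j+m)) := by
    intro m
    induction m with
    | zero => intro j h; exact subset_rfl
    | succ m ihm =>
      intro j h
      exact (ihm j (by omega)).trans (hmono1 (j+m) (by omega))
  have hmono' : ∀ j k, j ≤ k → k < ch.length → α (cg j) ⊆ α (cg k) := by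
    intro j k hjk hk
    obtain ⟨m, rfl⟩ : ∃ m, k = j + m := ⟨k - j, by omega⟩
    exact hmono m j hk
  -- difference sets are nonempty
  have hDne : ∀ k (hk : k + 1 < ch.length), (α (cg (k+1)) \ α (cg k)).Nonempty := by
    intro k hk
    rw [Finset.sdiff_nonempty]
    intro hsub
    have heq : α (cg k) = α (cg (k+1)) := Finset.Subset.antisymm (hmono1 k hk) hsub
    exact (hcov k hk).2.2.2.1 (StmtAux.alpha_inj cs γword hne α hα heq)
  -- labels are the minima of the difference sets
  have hlab : ∀ k (hk : k + 1 < ch.length),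
      cambLabel α (cg k) (cg (k+1)) = (α (cg (k+1)) \ α (cg k)).min' (hDne k hk) := by
    intro k hk
    rw [cambLabel, ← Finset.coe_min' (hDne k hk), WithTop.untopD_coe]
  -- label sequence entries
  have hll_len : (labelSeqC (cambLabel α) ch).length = ch.length - 1 := by
    show (List.zipWith (cambLabel α) ch ch.tail).length = _
    rw [List.length_zipWith, List.length_tail]
    omega
  have hll : ∀ k, k + 1 < ch.length →
      (labelSeqC (cambLabel α) ch).getD k 0 = cambLabel α (cg k) (cg (k+1)) := by
    intro k hk
    show (List.zipWith (cambLabel α) ch ch.tail).getD k 0 = _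
    have hlen : k < (List.zipWith (cambLabel α) ch ch.tail).length := by
      rw [List.length_zipWith, List.length_tail]
      omega
    rw [List.getD_eq_getElem _ _ hlen, List.getElem_zipWith, List.getElem_tail]
    rw [hgd k (by omega), hgd (k+1) hk]
    rfl
  -- difference sets are contained in α v \ α u
  have hDsub : ∀ k, k + 1 < ch.length → (α (cg (k+1)) \ α (cg k)) ⊆ α v \ α u := by
    intro k hk x hx
    obtain ⟨hx1, hx2⟩ := Finset.mem_sdiff.mp hx
    rw [Finset.mem_sdiff]
    constructor
    · rw [← hclast]
      exact hmono' (k+1) (ch.length - 1) (by omega) (by omega) hx1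
    · intro hxu
      apply hx2
      rw [← hc0] at hxu
      exact hmono' 0 k (by omega) (by omega) hxu
  set i₀ := (α v \ α u).min' hdiff with hi₀
  constructor
  · -- (i) the label i₀ appears
    have hi₀mem : i₀ ∈ α v \ α u := Finset.min'_mem _ _
    obtain ⟨hi₀v, hi₀u⟩ := Finset.mem_sdiff.mp hi₀mem
    have hPex : ∃ j, j < ch.length ∧ i₀ ∈ α (cg j) :=
      ⟨ch.length - 1, by omega, by rw [hclast]; exact hi₀v⟩
    obtain ⟨hk0L, hk0mem⟩ := Nat.find_spec hPex
    have hk0ne : Nat.find hPex ≠ 0 := by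
      intro h0
      rw [h0, hc0] at hk0mem
      exact hi₀u hk0mem
    have hk0le : Nat.find hPex ≤ ch.length - 1 :=
      Nat.find_min' hPex ⟨by omega, by rw [hclast]; exact hi₀v⟩
    set k := Nat.find hPex - 1 with hkk
    have hkk1 : k + 1 = Nat.find hPex := by omega
    have hkL : k + 1 < ch.length := by omega
    have hknot : i₀ ∉ α (cg k) := by
      intro hmem
      exact Nat.find_min hPex (show k < Nat.find hPex by omega) ⟨by omega, hmem⟩
    have hkmem : i₀ ∈ α (cg (k+1)) := by
      rw [hkk1]
      exact hk0mem
    have hi₀D : i₀ ∈ α (cg (k+1)) \ α (cg k) := Finset.mem_sdiff.mpr ⟨hkmem, hknot⟩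
    have hminD : (α (cg (k+1)) \ α (cg k)).min' (hDne k hkL) = i₀ := by
      apply _root_.le_antisymm
      · exact Finset.min'_le _ _ hi₀D
      · apply Finset.le_min'
        intro x hx
        exact Finset.min'_le _ _ (hDsub k hkL hx)
    have hfin : (labelSeqC (cambLabel α) ch).getD k 0 = i₀ := by
      rw [hll k hkL, hlab k hkL, hminD]
    have hkln : k < (labelSeqC (cambLabel α) ch).length := by
      rw [hll_len]
      omega
    rw [← hfin, List.getD_eq_getElem _ _ hkln]
    exact List.getElem_mem _
  · -- (ii) the labels are pairwise distinct
    rw [List.nodup_iff_getElem?_ne_getElem?]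
    intro j k hjk hk
    rw [hll_len] at hk
    have hjlen : j < (labelSeqC (cambLabel α) ch).length := by
      rw [hll_len]
      omega
    have hklen : k < (labelSeqC (cambLabel α) ch).length := by
      rw [hll_len]
      omega
    rw [List.getElem?_eq_getElem hjlen, List.getElem?_eq_getElem hklen,
      ← List.getD_eq_getElem _ 0 hjlen, ← List.getD_eq_getElem _ 0 hklen]
    intro heq
    have heq' : (labelSeqC (cambLabel α) ch).getD j 0 = (labelSeqC (cambLabel α) ch).getD k 0 :=
      Option.some_injective _ heq
    rw [hll j (by omega), hll k (by omega), hlab j (by omega), hlab k (by omega)] at heq'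
    have hjmem : (α (cg (j+1)) \ α (cg j)).min' (hDne j (by omega)) ∈ α (cg (j+1)) :=
      (Finset.mem_sdiff.mp (Finset.min'_mem _ (hDne j (by omega)))).1
    have hkmem : (α (cg (k+1)) \ α (cg k)).min' (hDne k (by omega)) ∉ α (cg k) :=
      (Finset.mem_sdiff.mp (Finset.min'_mem _ (hDne k (by omega)))).2
    apply hkmem
    rw [← heq']
    exact hmono' (j+1) k (by omega) (by omega) hjmem
end
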